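/- arXiv:2406.04211 — 6 statements merged into one kernel-verified Lean document; each statement's English description precedes it below -/
import Mathlib

section
/- The number of Stirling permutations of the multiset {1,1,2,2,...,n,n} in which the two copies of 1 are adjacent equals 2^{n-1}·(n-1)! for all n ≥ 1. -/
/-- A Stirling permutation of the multiset {1,1,2,2,...,n,n}, encoded as a list:
each `m ∈ [1,n]` appears exactly twice, and whenever two equal entries appear,
all entries strictly between them are strictly larger. -/
def IsStirling (n : ℕ) (σ : List ℕ) : Prop :=
  (∀ m : ℕ, σ.count m = if 1 ≤ m ∧ m ≤ n then 2 else 0) ∧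
  (∀ i s j : ℕ, i < s → s < j → j < σ.length →
    σ.getD i 0 = σ.getD j 0 → σ.getD i 0 < σ.getD s 0)

/-- The two copies of `1` occupy consecutive positions. -/
def OneAdjacent (σ : List ℕ) : Prop :=
  ∃ i : ℕ, i + 1 < σ.length ∧ σ.getD i 0 = 1 ∧ σ.getD (i+1) 0 = 1

section Aux


/-- decomposition form of the Stirling "between" condition -/
def Pc (σ : List ℕ) : Prop :=
  ∀ (A : List ℕ) (m : ℕ) (B C : List ℕ), σ = A ++ m :: (B ++ m :: C) → ∀ x ∈ B, m < x

lemma cond2_iff (σ : List ℕ) :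
    (∀ i s j : ℕ, i < s → s < j → j < σ.length →
      σ.getD i 0 = σ.getD j 0 → σ.getD i 0 < σ.getD s 0) ↔ Pc σ := by
  constructor
  · intro h A m B C hσ x hx
    obtain ⟨t, ht, hxt⟩ := List.mem_iff_getElem.1 hx
    have hlen : σ.length = A.length + 1 + B.length + 1 + C.length := by
      subst hσ; simp; omega
    have hi : σ.getD A.length 0 = m := by
      subst hσ
      rw [List.getD_append_right _ _ _ _ le_rfl]
      simp
    have hj : σ.getD (A.length + 1 + B.length) 0 = m := by
      subst hσ
      rw [List.getD_append_right _ _ _ _ (by omega)]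
      have : A.length + 1 + B.length - A.length = B.length + 1 - 1 + 1 := by omega
      rw [this, List.getD_cons_succ, List.getD_append_right _ _ _ _ (by omega)]
      simp
    have hs : σ.getD (A.length + 1 + t) 0 = x := by
      subst hσ
      rw [List.getD_append_right _ _ _ _ (by omega)]
      have : A.length + 1 + t - A.length = t + 1 := by omega
      rw [this, List.getD_cons_succ, List.getD_append _ _ _ _ (by omega)]
      rw [List.getD_eq_getElem _ _ ht, hxt]
    have := h A.length (A.length + 1 + t) (A.length + 1 + B.length)
      (by omega) (by omega) (by omega) (by rw [hi, hj])
    rw [hi, hs] at this; exact this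
  · intro h i s j his hsj hj hij
    have hi : i < σ.length := by omega
    have hs : s < σ.length := by omega
    have hdec : σ = σ.take i ++ σ[i] :: (((σ.drop (i+1)).take (j - (i+1))) ++ σ[j] :: σ.drop (j+1)) := by
      conv_lhs => rw [← List.take_append_drop i σ]
      congr 1
      rw [List.drop_eq_getElem_cons hi]
      congr 1
      conv_lhs => rw [← List.take_append_drop (j - (i+1)) (σ.drop (i+1))]
      rw [List.drop_drop]
      have hji : i + 1 + (j - (i+1)) = j := by omega
      rw [hji, List.drop_eq_getElem_cons hj]
    have hmem : σ[s] ∈ (σ.drop (i+1)).take (j - (i+1)) := by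
      rw [List.mem_iff_getElem]
      refine ⟨s - (i+1), ?_, ?_⟩
      · simp; omega
      · rw [List.getElem_take, List.getElem_drop]
        congr 1; omega
    have hgi : σ.getD i 0 = σ[i] := List.getD_eq_getElem _ _ hi
    have hgj : σ.getD j 0 = σ[j] := List.getD_eq_getElem _ _ hj
    have hgs : σ.getD s 0 = σ[s] := List.getD_eq_getElem _ _ hs
    have he : σ[i] = σ[j] := by rw [← hgi, ← hgj]; exact hij
    rw [he] at hdec
    have := h (σ.take i) σ[j] ((σ.drop (i+1)).take (j - (i+1))) (σ.drop (j+1)) hdec σ[s] hmem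
    rw [hgi, hgs, he]
    exact this

lemma oneAdj_iff (σ : List ℕ) : OneAdjacent σ ↔ ∃ A C, σ = A ++ 1 :: 1 :: C := by
  constructor
  · rintro ⟨i, hlen, h1, h2⟩
    refine ⟨σ.take i, σ.drop (i+2), ?_⟩
    have hi : i < σ.length := by omega
    have hi1 : i + 1 < σ.length := hlen
    conv_lhs => rw [← List.take_append_drop i σ]
    congr 1
    rw [List.drop_eq_getElem_cons hi]
    have : σ[i] = 1 := by rw [← List.getD_eq_getElem σ 0 hi]; exact h1
    rw [this]
    congr 1
    rw [List.drop_eq_getElem_cons hi1]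
    have : σ[i+1] = 1 := by rw [← List.getD_eq_getElem σ 0 hi1]; exact h2
    rw [this]
  · rintro ⟨A, C, rfl⟩
    refine ⟨A.length, by simp, ?_, ?_⟩
    · rw [List.getD_append_right _ _ _ _ le_rfl]; simp
    · rw [List.getD_append_right _ _ _ _ (by omega)]
      have : A.length + 1 - A.length = 1 := by omega
      rw [this]; rfl

lemma insP {T D : List ℕ} {v : ℕ} (hv : ∀ x ∈ T ++ D, x < v) (hP : Pc (T ++ D)) :
    Pc (T ++ v :: v :: D) := by
  intro A m B C h x hx
  have hvD : v ∉ D := fun hm => lt_irrefl v (hv v (by simp [hm]))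
  have hvT : v ∉ T := fun hm => lt_irrefl v (hv v (by simp [hm]))
  rcases List.append_eq_append_iff.1 h with ⟨W, hW1, hW2⟩ | ⟨W, hW1, hW2⟩
  · -- A = T ++ W, v::v::D = W ++ (m::(B ++ m::C))
    rcases W with _ | ⟨w1, _ | ⟨w2, W'⟩⟩
    · simp only [List.nil_append, List.cons.injEq] at hW2
      obtain ⟨rfl, hW2⟩ := hW2
      rcases B with _ | ⟨b, B'⟩
      · simp at hx
      · simp only [List.cons_append, List.cons.injEq] at hW2
        obtain ⟨rfl, hW2⟩ := hW2
        exact absurd (hW2 ▸ (by simp : v ∈ B' ++ v :: C)) hvD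
    · simp only [List.cons_append, List.nil_append, List.cons.injEq] at hW2
      obtain ⟨rfl, rfl, hW2⟩ := hW2
      exact absurd (hW2 ▸ (by simp : v ∈ B ++ v :: C)) hvD
    · simp only [List.cons_append, List.cons.injEq] at hW2
      obtain ⟨rfl, rfl, hW2⟩ := hW2
      exact hP (T ++ W') m B C (by rw [hW2]; simp) x hx
  · -- T = A ++ W, m::(B ++ m::C) = W ++ v::v::D
    rcases W with _ | ⟨m, W1⟩
    · rcases B with _ | ⟨b, B'⟩
      · simp at hx
      · simp only [List.nil_append, List.cons_append, List.cons.injEq] at hW2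
        obtain ⟨h1, h2, h3⟩ := hW2
        exact absurd (h1 ▸ h3 ▸ (by simp : m ∈ B' ++ m :: C)) hvD
    · simp only [List.cons_append, List.cons.injEq] at hW2
      obtain ⟨rfl, hW2⟩ := hW2
      -- B ++ m::C = W1 ++ v::v::D, T = A ++ m :: W1
      have hmT : m ∈ T := by rw [hW1]; simp
      have hmv : m < v := hv m (by simp [hmT])
      rcases List.append_eq_append_iff.1 hW2 with ⟨U, hU1, hU2⟩ | ⟨U, hU1, hU2⟩
      · -- W1 = B ++ U, m::C = U ++ v::v::D
        rcases U with _ | ⟨u, U'⟩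
        · simp only [List.nil_append, List.cons.injEq] at hU2
          obtain ⟨rfl, _⟩ := hU2
          omega
        · simp only [List.cons_append, List.cons.injEq] at hU2
          obtain ⟨rfl, hU2⟩ := hU2
          -- C = U' ++ v::v::D, W1 = B ++ m::U', T = A ++ m::(B ++ m::U')
          refine hP A m B (U' ++ D) ?_ x hx
          rw [hW1, hU1]
          simp
      · -- B = W1 ++ U, v::v::D = U ++ m::C
        rcases U with _ | ⟨u1, _ | ⟨u2, U'⟩⟩
        · simp only [List.nil_append, List.cons.injEq] at hU2
          obtain ⟨rfl, _⟩ := hU2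
          omega
        · simp only [List.cons_append, List.nil_append, List.cons.injEq] at hU2
          obtain ⟨rfl, rfl, _⟩ := hU2
          omega
        · simp only [List.cons_append, List.cons.injEq] at hU2
          obtain ⟨rfl, rfl, hU2⟩ := hU2
          -- D = U' ++ m :: C, B = W1 ++ v::v::U'
          have hPB : ∀ y ∈ W1 ++ U', m < y := by
            intro y hy
            refine hP (A) m (W1 ++ U') C ?_ y hy
            rw [hW1, hU2]
            simp
          rw [hU1] at hx
          simp only [List.mem_append, List.mem_cons] at hx
          rcases hx with hx | hx | hx | hx
          · exact hPB x (by simp [hx])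
          · omega
          · omega
          · exact hPB x (by simp [hx])

lemma delP {T D : List ℕ} {v : ℕ} (hv : ∀ x ∈ T ++ D, x < v) (hP : Pc (T ++ v :: v :: D)) :
    Pc (T ++ D) := by
  intro A m B C h x hx
  rcases List.append_eq_append_iff.1 h with ⟨W, hW1, hW2⟩ | ⟨W, hW1, hW2⟩
  · -- A = T ++ W, D = W ++ m::(B++m::C)
    exact hP (T ++ v :: v :: W) m B C (by rw [hW2]; simp) x hx
  · -- T = A ++ W, m::(B++m::C) = W ++ D
    rcases W with _ | ⟨m, W1⟩
    · simp only [List.nil_append] at hW2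
      exact hP (A ++ [v, v]) m B C (by rw [hW1, ← hW2]; simp) x hx
    · simp only [List.cons_append, List.cons.injEq] at hW2
      obtain ⟨rfl, hW2⟩ := hW2
      rcases List.append_eq_append_iff.1 hW2 with ⟨U, hU1, hU2⟩ | ⟨U, hU1, hU2⟩
      · -- W1 = B ++ U, m::C = U ++ D
        rcases U with _ | ⟨u, U'⟩
        · simp only [List.nil_append] at hU2
          have := hP A m (B ++ [v, v]) C (by rw [hW1, hU1, ← hU2]; simp) x (by simp [hx])
          exact this
        · simp only [List.cons_append, List.cons.injEq] at hU2
          obtain ⟨rfl, hU2⟩ := hU2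
          exact hP A m B (U' ++ v :: v :: D) (by rw [hW1, hU1]; simp) x hx
      · -- B = W1 ++ U, D = U ++ m::C
        have := hP A m (W1 ++ v :: v :: U) C (by rw [hW1, hU2]; simp) x
          (by rw [hU1] at hx; simp only [List.mem_append] at hx ⊢
              rcases hx with hx | hx
              · exact Or.inl hx
              · exact Or.inr (by simp [hx]))
        exact this


lemma length_eq {n : ℕ} {σ : List ℕ}
    (h : ∀ m : ℕ, σ.count m = if 1 ≤ m ∧ m ≤ n then 2 else 0) : σ.length = 2 * n := by
  have hM : (σ : Multiset ℕ) = (Finset.Icc 1 n).val + (Finset.Icc 1 n).val := by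
    refine Multiset.ext.2 fun m => ?_
    rw [Multiset.count_add, Multiset.coe_count, h m]
    by_cases hm : m ∈ Finset.Icc 1 n
    · rw [Multiset.count_eq_one_of_mem (Finset.Icc 1 n).nodup hm]
      rw [Finset.mem_Icc] at hm
      simp [hm]
    · rw [Multiset.count_eq_zero_of_notMem hm]
      rw [Finset.mem_Icc] at hm
      simp [hm]
  have : (σ : Multiset ℕ).card = σ.length := Multiset.coe_card σ
  rw [hM] at this
  simp [Nat.card_Icc] at this
  omega

lemma mem_bound {n : ℕ} {σ : List ℕ}
    (h : ∀ m : ℕ, σ.count m = if 1 ≤ m ∧ m ≤ n then 2 else 0) :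
    ∀ x ∈ σ, 1 ≤ x ∧ x ≤ n := by
  intro x hx
  by_contra hc
  have h0 : σ.count x = 0 := by rw [h x, if_neg hc]
  exact (List.count_eq_zero.1 h0) hx

lemma firstocc_unique {v : ℕ} {A R A' R' : List ℕ} (hA : v ∉ A) (hA' : v ∉ A')
    (h : A ++ v :: R = A' ++ v :: R') : A = A' ∧ R = R' := by
  rcases List.append_eq_append_iff.1 h with ⟨W, hW1, hW2⟩ | ⟨W, hW1, hW2⟩
  · rcases W with _ | ⟨w, W'⟩
    · simp at hW1 hW2; exact ⟨hW1.symm, hW2⟩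
    · simp only [List.cons_append, List.cons.injEq] at hW2
      exact absurd (by rw [hW1, hW2.1]; simp : v ∈ A') hA'
  · rcases W with _ | ⟨w, W'⟩
    · simp at hW1 hW2; exact ⟨hW1, hW2.symm⟩
    · simp only [List.cons_append, List.cons.injEq] at hW2
      exact absurd (by rw [hW1, ← hW2.1]; simp : v ∈ A) hA

lemma indexOf_first {v : ℕ} {A R : List ℕ} (hA : v ∉ A) :
    (A ++ v :: R).idxOf v = A.length := by
  induction A with
  | nil => simp
  | cons a A ih =>
    have ha : v ≠ a := fun h => hA (by simp [h])
    simp only [List.cons_append, List.length_cons]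
    rw [List.idxOf_cons_ne _ (by exact fun h => ha h.symm), ih (fun h => hA (by simp [h]))]

lemma exists_first {v : ℕ} {l : List ℕ} (h : v ∈ l) : ∃ s t, l = s ++ v :: t ∧ v ∉ s := by
  induction l with
  | nil => simp at h
  | cons a l ih =>
    by_cases hv : v = a
    · exact ⟨[], l, by simp [hv], by simp⟩
    · have hmem : v ∈ l := by
        rcases List.mem_cons.1 h with h | h
        · exact absurd h hv
        · exact h
      rcases ih hmem with ⟨s, t, rfl, hs⟩
      refine ⟨a :: s, t, by simp, ?_⟩
      simp only [List.mem_cons, not_or]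
      exact ⟨hv, hs⟩

end Aux

def skipf (σ : List ℕ) (k : ℕ) : ℕ := if k ≤ σ.idxOf 1 then k else k + 1

def insf (n : ℕ) (p : List ℕ × ℕ) : List ℕ :=
  p.1.take (skipf p.1 p.2) ++ (n+1) :: (n+1) :: p.1.drop (skipf p.1 p.2)

lemma block1 {n : ℕ} {σ : List ℕ} (hn : 1 ≤ n)
    (h1 : ∀ m : ℕ, σ.count m = if 1 ≤ m ∧ m ≤ n then 2 else 0) (h2 : OneAdjacent σ) :
    ∃ E F, σ = E ++ 1 :: 1 :: F ∧ 1 ∉ E ∧ 1 ∉ F ∧ σ.idxOf 1 = E.length := by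
  obtain ⟨E, F, rfl⟩ := (oneAdj_iff _).1 h2
  have hc := h1 1
  rw [if_pos ⟨le_rfl, hn⟩] at hc
  simp only [List.count_append, List.count_cons_self, List.count_cons] at hc
  have hE : 1 ∉ E := by
    have : E.count 1 = 0 := by omega
    exact List.count_eq_zero.1 this
  have hF : 1 ∉ F := by
    have : F.count 1 = 0 := by omega
    exact List.count_eq_zero.1 this
  exact ⟨E, F, rfl, hE, hF, indexOf_first hE⟩

lemma count_ins (σ : List ℕ) (p v m : ℕ) :
    (σ.take p ++ v :: v :: σ.drop p).count m = σ.count m + (if m = v then 2 else 0) := by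
  have h : σ.count m = (σ.take p).count m + (σ.drop p).count m := by
    rw [← List.count_append, List.take_append_drop]
  rw [h]
  by_cases hmv : m = v
  · subst hmv
    simp [List.count_cons]
    omega
  · simp [List.count_cons, hmv, (Ne.symm hmv : v ≠ m)]

lemma mapsTo_insf {n : ℕ} (hn : 1 ≤ n) :
    Set.MapsTo (insf n) ({σ | IsStirling n σ ∧ OneAdjacent σ} ×ˢ Set.Iio (2*n))
      {σ | IsStirling (n+1) σ ∧ OneAdjacent σ} := by
  rintro ⟨σ, k⟩ ⟨⟨⟨h1, h2⟩, hadj⟩, hk⟩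
  simp only [Set.mem_Iio] at hk
  dsimp only at h1 h2 hadj
  obtain ⟨E, F, hEF, hE, hF, hidx⟩ := block1 hn h1 hadj
  have hlen : σ.length = 2 * n := length_eq h1
  have hElen : E.length + 2 + F.length = 2 * n := by
    rw [hEF] at hlen; simp at hlen; omega
  set p := skipf σ k with hpdef
  have hp : p = if k ≤ E.length then k else k + 1 := by rw [hpdef, skipf, hidx]
  have hins : insf n (σ, k) = σ.take p ++ (n+1) :: (n+1) :: σ.drop p := rfl
  rw [Set.mem_setOf_eq, hins]
  refine ⟨⟨?_, ?_⟩, ?_⟩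
  · intro m
    rw [count_ins, h1 m]
    split_ifs <;> omega
  · refine (cond2_iff _).2 ?_
    have hv : ∀ x ∈ σ.take p ++ σ.drop p, x < n + 1 := by
      rw [List.take_append_drop]
      intro x hx
      have := mem_bound h1 x hx
      omega
    have hP : Pc (σ.take p ++ σ.drop p) := by
      rw [List.take_append_drop]
      exact (cond2_iff _).1 h2
    exact insP hv hP
  · refine (oneAdj_iff _).2 ?_
    by_cases hkE : k ≤ E.length
    · have hpE : p ≤ E.length := by rw [hp, if_pos hkE]; exact hkE
      have ht : σ.take p = E.take p := by
        rw [hEF]; exact List.take_append_of_le_length hpE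
      have hd : σ.drop p = E.drop p ++ 1 :: 1 :: F := by
        rw [hEF]; exact List.drop_append_of_le_length hpE
      exact ⟨E.take p ++ (n+1) :: (n+1) :: E.drop p, F, by rw [ht, hd]; simp⟩
    · have hpE : E.length + 2 ≤ p := by rw [hp, if_neg hkE]; omega
      have hEF' : σ = (E ++ [1, 1]) ++ F := by rw [hEF]; simp
      have hlE : (E ++ [1, 1]).length = E.length + 2 := by simp
      have ht : σ.take p = (E ++ [1, 1]) ++ F.take (p - (E.length + 2)) := by
        rw [hEF', List.take_append, List.take_of_length_le (by omega), hlE]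
      have hd : σ.drop p = F.drop (p - (E.length + 2)) := by
        rw [hEF', List.drop_append, List.drop_eq_nil_of_le (by omega), hlE]
        simp
      refine ⟨E, F.take (p - (E.length + 2)) ++ (n+1) :: (n+1) :: F.drop (p - (E.length + 2)), ?_⟩
      rw [ht, hd]; simp

lemma injOn_insf {n : ℕ} (hn : 1 ≤ n) :
    Set.InjOn (insf n) ({σ | IsStirling n σ ∧ OneAdjacent σ} ×ˢ Set.Iio (2*n)) := by
  rintro ⟨σ, k⟩ ⟨⟨⟨h1, h2⟩, hadj⟩, hk⟩ ⟨σ', k'⟩ ⟨⟨⟨h1', h2'⟩, hadj'⟩, hk'⟩ heq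
  simp only [Set.mem_Iio] at hk hk'
  dsimp only at h1 h2 hadj h1' h2' hadj'
  obtain ⟨E, F, hEF, hE, hF, hidx⟩ := block1 hn h1 hadj
  obtain ⟨E', F', hEF', hE', hF', hidx'⟩ := block1 hn h1' hadj'
  have hlen : σ.length = 2 * n := length_eq h1
  have hlen' : σ'.length = 2 * n := length_eq h1'
  set p := skipf σ k with hpdef
  set p' := skipf σ' k' with hpdef'
  have hElen : E.length + 2 + F.length = 2 * n := by rw [hEF] at hlen; simp at hlen; omega
  have hElen' : E'.length + 2 + F'.length = 2 * n := by rw [hEF'] at hlen'; simp at hlen'; omega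
  have hp : p = if k ≤ E.length then k else k + 1 := by rw [hpdef, skipf, hidx]
  have hp' : p' = if k' ≤ E'.length then k' else k' + 1 := by rw [hpdef', skipf, hidx']
  have hple : p ≤ 2 * n := by rw [hp]; split_ifs <;> omega
  have hple' : p' ≤ 2 * n := by rw [hp']; split_ifs <;> omega
  have hvσ : (n+1) ∉ σ := fun hm => by have := mem_bound h1 _ hm; omega
  have hvσ' : (n+1) ∉ σ' := fun hm => by have := mem_bound h1' _ hm; omega
  have hvt : (n+1) ∉ σ.take p := fun hm => hvσ (List.mem_of_mem_take hm)
  have hvt' : (n+1) ∉ σ'.take p' := fun hm => hvσ' (List.mem_of_mem_take hm)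
  have heq' : σ.take p ++ (n+1) :: ((n+1) :: σ.drop p)
      = σ'.take p' ++ (n+1) :: ((n+1) :: σ'.drop p') := heq
  obtain ⟨hT, hR⟩ := firstocc_unique hvt hvt' heq'
  have hD : σ.drop p = σ'.drop p' := by
    injection hR
  have hσ : σ = σ' := by
    rw [← List.take_append_drop p σ, ← List.take_append_drop p' σ', hT, hD]
  have hpp : p = p' := by
    have := congrArg List.length hT
    rw [List.length_take, List.length_take, hlen, hlen'] at this
    omega
  have hkk : k = k' := by
    rw [hσ] at hidx
    rw [hidx'] at hidx
    rw [hp, hp'] at hpp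
    split_ifs at hpp <;> omega
  simp only [Prod.mk.injEq]
  exact ⟨hσ, hkk⟩

lemma surjOn_insf {n : ℕ} (hn : 1 ≤ n) :
    Set.SurjOn (insf n) ({σ | IsStirling n σ ∧ OneAdjacent σ} ×ˢ Set.Iio (2*n))
      {σ | IsStirling (n+1) σ ∧ OneAdjacent σ} := by
  rintro τ ⟨⟨h1', h2'⟩, hadj'⟩
  have hb := mem_bound h1'
  have hvcnt : τ.count (n+1) = 2 := by rw [h1' (n+1), if_pos ⟨by omega, le_rfl⟩]
  have hvmem : (n+1) ∈ τ := by
    by_contra h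
    rw [List.count_eq_zero.2 h] at hvcnt
    omega
  obtain ⟨X, Z, rfl, hX⟩ := exists_first hvmem
  have hXc : X.count (n+1) = 0 := List.count_eq_zero.2 hX
  have hZc : Z.count (n+1) = 1 := by
    simp only [List.count_append, List.count_cons_self] at hvcnt
    omega
  have hvZ : (n+1) ∈ Z := by
    by_contra h
    rw [List.count_eq_zero.2 h] at hZc
    omega
  obtain ⟨W, Y, rfl, hW⟩ := exists_first hvZ
  have hY : (n+1) ∉ Y := by
    have : Y.count (n+1) = 0 := by
      simp only [List.count_append, List.count_cons_self] at hZc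
      have : W.count (n+1) = 0 := List.count_eq_zero.2 hW
      omega
    exact List.count_eq_zero.1 this
  have hPc := (cond2_iff _).1 h2'
  have hWnil : W = [] := by
    rcases W with _ | ⟨w, W'⟩
    · rfl
    · exfalso
      have hlt := hPc X (n+1) (w :: W') Y rfl w (by simp)
      have := hb w (by simp)
      omega
  subst hWnil
  simp only [List.nil_append] at *
  -- now τ = X ++ (n+1) :: (n+1) :: Y
  set σ := X ++ Y with hσdef
  set p := X.length with hpXdef
  have hvnσ : (n+1) ∉ σ := by
    simp only [hσdef, List.mem_append, not_or]
    exact ⟨hX, hY⟩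
  have hcnt : ∀ m : ℕ, σ.count m = if 1 ≤ m ∧ m ≤ n then 2 else 0 := by
    intro m
    have hm := h1' m
    have hexp : (X ++ (n+1) :: (n+1) :: Y).count m = σ.count m + (if m = n+1 then 2 else 0) := by
      have : X ++ (n+1) :: (n+1) :: Y = σ.take p ++ (n+1) :: (n+1) :: σ.drop p := by
        rw [hσdef, hpXdef, List.take_left, List.drop_left]
      rw [this, count_ins]
    rw [hexp] at hm
    by_cases hmv : m = n + 1
    · rw [List.count_eq_zero.2 (hmv ▸ hvnσ)]
      rw [if_neg (by omega)]
    · rw [if_neg hmv, Nat.add_zero] at hm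
      rw [hm]
      split_ifs <;> omega
  have hPcσ : Pc σ := by
    refine delP (v := n+1) ?_ hPc
    intro x hx
    have hxτ : x ∈ X ++ (n+1) :: (n+1) :: Y := by
      rcases List.mem_append.1 hx with h | h
      · exact List.mem_append.2 (Or.inl h)
      · exact List.mem_append.2 (Or.inr (by simp [h]))
    have hxb := hb x hxτ
    have hxne : x ≠ n + 1 := fun h => hvnσ (h ▸ hx)
    omega
  have hadjσ : ∃ A C, σ = A ++ 1 :: 1 :: C := by
    obtain ⟨A, C, hAC⟩ := (oneAdj_iff _).1 hadj'
    rcases List.append_eq_append_iff.1 hAC with ⟨G, hG1, hG2⟩ | ⟨G, hG1, hG2⟩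
    · -- A = X ++ G, (n+1)::(n+1)::Y = G ++ 1::1::C
      rcases G with _ | ⟨g1, _ | ⟨g2, G'⟩⟩
      · simp only [List.nil_append, List.cons.injEq] at hG2
        omega
      · simp only [List.cons_append, List.nil_append, List.cons.injEq] at hG2
        omega
      · simp only [List.cons_append, List.cons.injEq] at hG2
        obtain ⟨hg1, hg2, hG2⟩ := hG2
        exact ⟨X ++ G', C, by rw [hσdef, hG2]; simp⟩
    · -- X = A ++ G, 1::1::C = G ++ (n+1)::(n+1)::Y
      rcases G with _ | ⟨g1, _ | ⟨g2, G'⟩⟩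
      · simp only [List.nil_append, List.cons.injEq] at hG2
        omega
      · simp only [List.cons_append, List.nil_append, List.cons.injEq] at hG2
        omega
      · simp only [List.cons_append, List.cons.injEq] at hG2
        obtain ⟨hg1, hg2, hG2⟩ := hG2
        refine ⟨A, G' ++ Y, ?_⟩
        rw [hσdef, hG1, ← hg1, ← hg2]
        simp
  have hstir : IsStirling n σ ∧ OneAdjacent σ := ⟨⟨hcnt, (cond2_iff _).2 hPcσ⟩, (oneAdj_iff _).2 hadjσ⟩
  obtain ⟨E, F, hEF, hE, hF, hidx⟩ := block1 hn hcnt ((oneAdj_iff _).2 hadjσ)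
  have hlenσ : σ.length = 2 * n := length_eq hcnt
  have hElen : E.length + 2 + F.length = 2 * n := by rw [hEF] at hlenσ; simp at hlenσ; omega
  have hplen : p ≤ 2 * n := by
    have : σ.length = X.length + Y.length := by rw [hσdef]; simp
    omega
  -- the count of 1 in τ, to show p ≠ E.length + 1
  have hpne : p ≠ E.length + 1 := by
    intro hp1
    have hXeq : X = E ++ [1] := by
      have : X = σ.take p := by rw [hσdef, hpXdef, List.take_left]
      rw [this, hp1, hEF, List.take_append,
        List.take_of_length_le (by omega : E.length ≤ E.length + 1)]
      have : E.length + 1 - E.length = 1 := by omega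
      rw [this]
      rfl
    have hYeq : Y = 1 :: F := by
      have : Y = σ.drop p := by rw [hσdef, hpXdef, List.drop_left]
      rw [this, hp1, hEF, List.drop_append,
        List.drop_eq_nil_of_le (by omega : E.length ≤ E.length + 1)]
      have : E.length + 1 - E.length = 1 := by omega
      rw [this]
      rfl
    -- τ = E ++ 1 :: (n+1)::(n+1)::1::F ; but also τ = A ++ 1::1::C with 1 ∉ A
    have hc1 : (X ++ (n+1) :: (n+1) :: Y).count 1 = 2 := by
      rw [h1' 1, if_pos ⟨le_rfl, by omega⟩]
    obtain ⟨A, C, hAC⟩ := (oneAdj_iff _).1 hadj'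
    have hA1 : 1 ∉ A := by
      rw [hAC] at hc1
      simp only [List.count_append, List.count_cons_self] at hc1
      exact List.count_eq_zero.1 (by omega)
    have hτeq : E ++ 1 :: ((n+1) :: (n+1) :: 1 :: F) = A ++ 1 :: (1 :: C) := by
      rw [← hAC, hXeq, hYeq]
      simp
    obtain ⟨_, htail⟩ := firstocc_unique hE hA1 hτeq
    have : (n+1 : ℕ) = 1 := by injection htail
    omega
  set k := if p ≤ E.length then p else p - 1 with hkdef
  have hpcase : p ≤ E.length ∨ E.length + 2 ≤ p := by
    by_cases h : p ≤ E.length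
    · exact Or.inl h
    · right; omega
  have hk2n : k < 2 * n := by
    rcases hpcase with h | h
    · rw [hkdef, if_pos h]; omega
    · rw [hkdef, if_neg (by omega)]; omega
  have hskip : skipf σ k = p := by
    rcases hpcase with h | h
    · have hk : k = p := by rw [hkdef, if_pos h]
      rw [skipf, hidx, hk, if_pos h]
    · have hk : k = p - 1 := by rw [hkdef, if_neg (by omega)]
      rw [skipf, hidx, hk, if_neg (by omega : ¬ (p - 1 ≤ E.length))]
      omega
  refine ⟨(σ, k), ⟨⟨hstir.1, hstir.2⟩, by simpa using hk2n⟩, ?_⟩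
  show insf n (σ, k) = _
  rw [insf]
  dsimp only
  rw [hskip, hσdef, hpXdef, List.take_left, List.drop_left]

lemma ncard_prod' {α β : Type*} (s : Set α) (t : Set β) :
    (s ×ˢ t).ncard = s.ncard * t.ncard := by
  rw [← Nat.card_coe_set_eq, ← Nat.card_coe_set_eq, ← Nat.card_coe_set_eq,
    ← Nat.card_prod]
  exact Nat.card_congr (Equiv.Set.prod s t)

lemma base_case : {σ : List ℕ | IsStirling 1 σ ∧ OneAdjacent σ} = {[1, 1]} := by
  ext σ
  simp only [Set.mem_setOf_eq, Set.mem_singleton_iff]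
  constructor
  · rintro ⟨⟨h1, h2⟩, hadj⟩
    have hlen : σ.length = 2 := by have := length_eq h1; omega
    have hc : σ.count 1 = σ.length := by rw [h1 1, if_pos ⟨le_rfl, le_rfl⟩, hlen]
    have hall := List.count_eq_length.1 hc
    rcases σ with _ | ⟨a, _ | ⟨b, _ | ⟨c, t⟩⟩⟩ <;> simp at hlen
    rw [← hall a (by simp), ← hall b (by simp)]
  · rintro rfl
    refine ⟨⟨?_, ?_⟩, ⟨0, by simp, rfl, rfl⟩⟩
    · intro m
      by_cases hm : m = 1
      · subst hm; simp
      · rw [if_neg (by omega)]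
        simp [List.count_cons, hm, Ne.symm hm]
    · intro i s j his hsj hj _
      simp at hj
      omega

theorem stirling_one_adjacent_count (n : ℕ) (hn : 1 ≤ n) :
    Set.ncard {σ : List ℕ | IsStirling n σ ∧ OneAdjacent σ} =
      2 ^ (n - 1) * (n - 1).factorial := by
  induction n, hn using Nat.le_induction with
  | base => rw [base_case]; simp
  | succ n hn ih =>
    have hbij : Set.BijOn (insf n) ({σ | IsStirling n σ ∧ OneAdjacent σ} ×ˢ Set.Iio (2*n))
        {σ | IsStirling (n+1) σ ∧ OneAdjacent σ} :=
      ⟨mapsTo_insf hn, injOn_insf hn, surjOn_insf hn⟩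
    rw [← hbij.image_eq, Set.ncard_image_of_injOn hbij.injOn, ncard_prod', ih]
    have hIio : (Set.Iio (2*n)).ncard = 2*n := by
      rw [← Finset.coe_Iio, Set.ncard_coe_finset, Nat.card_Iio]
    rw [hIio]
    obtain ⟨m, rfl⟩ : ∃ m, n = m + 1 := ⟨n - 1, by omega⟩
    simp only [Nat.add_sub_cancel]
    rw [pow_succ, Nat.factorial_succ]
    ring
end

section
/- For every n ≥ 1, summing x^{des_A(π)} over all signed permutations π in the hyperoctahedral group S_n^B gives 2^n · A_n(x), where A_n(x) is the type A Eulerian polynomial (the generating polynomial of descents over the symmetric group S_n). -/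
/-- A signed permutation of `{1,…,n}`, encoded by an underlying permutation together
with a sign for each position. -/
abbrev SignedPerm (n : ℕ) := Equiv.Perm (Fin n) × (Fin n → Bool)

/-- The entry `π(i)` of a signed permutation (1-based, `1 ≤ i ≤ n`), as an integer;
by convention `π(0) = 0` and entries out of range are `0`. -/
def sEnt (n : ℕ) (π : SignedPerm n) (i : ℕ) : ℤ :=
  if h : 1 ≤ i ∧ i ≤ n then
    (if π.2 ⟨i - 1, by omega⟩ then -(((π.1 ⟨i - 1, by omega⟩ : ℕ) : ℤ) + 1)
     else ((π.1 ⟨i - 1, by omega⟩ : ℕ) : ℤ) + 1)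
  else 0

/-- Type `A` descents: `#{1 ≤ i ≤ n-1 : π(i) > π(i+1)}`. -/
def desA (n : ℕ) (π : SignedPerm n) : ℕ :=
  ((Finset.Icc 1 (n - 1)).filter fun i => sEnt n π (i + 1) < sEnt n π i).card

/-- Type `B` descents: `#{0 ≤ i ≤ n-1 : π(i) > π(i+1)}`, with `π(0) = 0`. -/
def desB (n : ℕ) (π : SignedPerm n) : ℕ :=
  ((Finset.range n).filter fun i => sEnt n π (i + 1) < sEnt n π i).card

/-- Number of negative entries of a signed permutation. -/
def negS (n : ℕ) (π : SignedPerm n) : ℕ :=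
  (Finset.univ.filter fun i : Fin n => π.2 i = true).card

/-- The entry `σ(i)` of an ordinary permutation (1-based, values in `{1,…,n}`),
with out-of-range convention `0`. -/
def pEnt (n : ℕ) (σ : Equiv.Perm (Fin n)) (i : ℕ) : ℕ :=
  if h : 1 ≤ i ∧ i ≤ n then (σ ⟨i - 1, by omega⟩ : ℕ) + 1 else 0

/-- Number of descents of an ordinary permutation. -/
def desP (n : ℕ) (σ : Equiv.Perm (Fin n)) : ℕ :=
  ((Finset.Icc 1 (n - 1)).filter fun i => pEnt n σ (i + 1) < pEnt n σ i).card

/-- signed value of absolute value `j+1` with sign `ε j`. -/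
def sval (n : ℕ) (ε : Fin n → Bool) (j : Fin n) : ℤ :=
  if ε j then -(((j : ℕ) : ℤ) + 1) else ((j : ℕ) : ℤ) + 1

lemma sval_injective (n : ℕ) (ε : Fin n → Bool) : Function.Injective (sval n ε) := by
  intro a b h
  unfold sval at h
  split_ifs at h
  · exact Fin.ext (by omega)
  · omega
  · omega
  · exact Fin.ext (by omega)

def eperm (n : ℕ) (ε : Fin n → Bool) : Equiv.Perm (Fin n) := Tuple.sort (sval n ε)

lemma strictMono_g (n : ℕ) (ε : Fin n → Bool) :
    StrictMono (sval n ε ∘ eperm n ε) := by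
  have hm : Monotone (sval n ε ∘ eperm n ε) := Tuple.monotone_sort _
  exact hm.strictMono_of_injective ((sval_injective n ε).comp (eperm n ε).injective)
/-- The descent-preserving bijection. -/
def sE (n : ℕ) : ((Fin n → Bool) × Equiv.Perm (Fin n)) ≃ SignedPerm n where
  toFun p := (p.2.trans (eperm n p.1), fun i => p.1 ((p.2.trans (eperm n p.1)) i))
  invFun π := (fun j => π.2 (π.1.symm j),
    π.1.trans (eperm n (fun j => π.2 (π.1.symm j))).symm)
  left_inv := by
    rintro ⟨ε, σ⟩
    have hε : (fun j => ε ((σ.trans (eperm n ε)) ((σ.trans (eperm n ε)).symm j))) = ε := by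
      funext j; simp
    refine Prod.ext hε ?_
    simp only [hε]
    ext i
    simp [Equiv.trans_apply]
  right_inv := by
    rintro ⟨τ, s⟩
    have h1 : (τ.trans (eperm n fun j => s (τ.symm j)).symm).trans
        (eperm n fun j => s (τ.symm j)) = τ := by
      ext i; simp [Equiv.trans_apply]
    refine Prod.ext ?_ ?_
    · simpa using h1
    · funext i
      simp only [h1]
      simp [Equiv.trans_apply]

lemma desA_sE (n : ℕ) (ε : Fin n → Bool) (σ : Equiv.Perm (Fin n)) :
    desA n (sE n (ε, σ)) = desP n σ := by
  unfold desA desP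
  apply Finset.card_bij (fun i _ => i) ?_ (fun _ h _ _ => id) (fun i hi => ⟨i, ?_, rfl⟩)
  · intro i hi
    simp only [Finset.mem_filter, Finset.mem_Icc] at hi ⊢
    obtain ⟨⟨h1, h2⟩, h3⟩ := hi
    refine ⟨⟨h1, h2⟩, ?_⟩
    have hr1 : 1 ≤ i ∧ i ≤ n := ⟨h1, by omega⟩
    have hr2 : 1 ≤ i + 1 ∧ i + 1 ≤ n := ⟨by omega, by omega⟩
    rw [pEnt, pEnt, dif_pos hr1, dif_pos hr2]
    rw [sEnt, sEnt, dif_pos hr1, dif_pos hr2] at h3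
    have key : ∀ (k : ℕ) (hkn : k < n),
        (if (sE n (ε, σ)).2 ⟨k, hkn⟩ then
            -((((sE n (ε, σ)).1 ⟨k, hkn⟩ : ℕ) : ℤ) + 1)
          else (((sE n (ε, σ)).1 ⟨k, hkn⟩ : ℕ) : ℤ) + 1) =
          (sval n ε ∘ eperm n ε) (σ ⟨k, hkn⟩) := by
      intro k hkn
      simp only [sE, Equiv.coe_fn_mk, Equiv.trans_apply, Function.comp_apply, sval]
      rfl
    rw [key (i-1) (by omega), key (i+1-1) (by omega)] at h3
    have := (strictMono_g n ε).lt_iff_lt.mp h3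
    have hfin : (σ ⟨i + 1 - 1, by omega⟩ : ℕ) < (σ ⟨i - 1, by omega⟩ : ℕ) := this
    omega
  · simp only [Finset.mem_filter, Finset.mem_Icc] at hi ⊢
    obtain ⟨⟨h1, h2⟩, h3⟩ := hi
    refine ⟨⟨h1, h2⟩, ?_⟩
    have hr1 : 1 ≤ i ∧ i ≤ n := ⟨h1, by omega⟩
    have hr2 : 1 ≤ i + 1 ∧ i + 1 ≤ n := ⟨by omega, by omega⟩
    rw [pEnt, pEnt, dif_pos hr1, dif_pos hr2] at h3
    rw [sEnt, sEnt, dif_pos hr1, dif_pos hr2]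
    have key : ∀ (k : ℕ) (hkn : k < n),
        (if (sE n (ε, σ)).2 ⟨k, hkn⟩ then
            -((((sE n (ε, σ)).1 ⟨k, hkn⟩ : ℕ) : ℤ) + 1)
          else (((sE n (ε, σ)).1 ⟨k, hkn⟩ : ℕ) : ℤ) + 1) =
          (sval n ε ∘ eperm n ε) (σ ⟨k, hkn⟩) := by
      intro k hkn
      simp only [sE, Equiv.coe_fn_mk, Equiv.trans_apply, Function.comp_apply, sval]
      rfl
    rw [key (i-1) (by omega), key (i+1-1) (by omega)]
    apply (strictMono_g n ε).lt_iff_lt.mpr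
    have : (σ ⟨i + 1 - 1, by omega⟩ : ℕ) < (σ ⟨i - 1, by omega⟩ : ℕ) := by omega
    exact this

theorem desA_sum_eq (n : ℕ) (hn : 1 ≤ n) (x : ℚ) :
    ∑ π : SignedPerm n, x ^ desA n π =
      2 ^ n * ∑ σ : Equiv.Perm (Fin n), x ^ desP n σ := by
  rw [← Equiv.sum_comp (sE n) (fun π => x ^ desA n π)]
  rw [Fintype.sum_prod_type]
  have : ∀ ε : Fin n → Bool, ∀ σ : Equiv.Perm (Fin n),
      x ^ desA n (sE n (ε, σ)) = x ^ desP n σ := fun ε σ => by rw [desA_sE]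
  simp_rw [this]
  rw [Finset.sum_const, Finset.card_univ, Fintype.card_fun, Fintype.card_bool,
    Fintype.card_fin, nsmul_eq_mul]
  push_cast
  ring
end

section
/- Define double sequences ξ(n,k) and ζ(n,k) by ξ(1,0)=1, ξ(1,k)=0 for k≠0, ζ(1,k)=0 for all k, and ξ(n+1,k) = (1+2k)ξ(n,k) + (n-2k+1)ξ(n,k-1) + (1/2)ζ(n,k-1), ζ(n+1,k) = 2(1+k)ζ(n,k) + (n-2k)ζ(n,k-1) + 2ξ(n,k). Then all ξ(n,k) and ζ(n,k) are nonnegative integers. -/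
theorem xi_zeta_nonneg_integers
    (ξ ζ : ℕ → ℤ → ℚ)
    (hξ10 : ξ 1 0 = 1) (hξ1 : ∀ k : ℤ, k ≠ 0 → ξ 1 k = 0)
    (hζ1 : ∀ k : ℤ, ζ 1 k = 0)
    (hneg : ∀ (n : ℕ) (k : ℤ), k < 0 → ξ n k = 0 ∧ ζ n k = 0)
    (hrec : ∀ n : ℕ, 1 ≤ n → ∀ k : ℤ,
      ξ (n + 1) k = (1 + 2 * (k : ℚ)) * ξ n k
          + ((n : ℚ) - 2 * (k : ℚ) + 1) * ξ n (k - 1) + (1/2) * ζ n (k - 1) ∧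
      ζ (n + 1) k = 2 * (1 + (k : ℚ)) * ζ n k
          + ((n : ℚ) - 2 * (k : ℚ)) * ζ n (k - 1) + 2 * ξ n k) :
    ∀ n : ℕ, 1 ≤ n → ∀ k : ℤ,
      (∃ a : ℕ, ξ n k = (a : ℚ)) ∧ (∃ b : ℕ, ζ n k = (b : ℚ)) := by
  suffices H : ∀ n : ℕ, 1 ≤ n → ∀ k : ℤ,
      (∃ a : ℕ, ξ n k = (a : ℚ)) ∧ (∃ b : ℕ, ζ n k = 2 * (b : ℚ)) ∧
      ((n : ℤ) ≤ 2 * k → ξ n k = 0) ∧ ((n : ℤ) - 1 ≤ 2 * k → ζ n k = 0) by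
    intro n hn k
    obtain ⟨⟨a, ha⟩, ⟨b, hb⟩, -, -⟩ := H n hn k
    exact ⟨⟨a, ha⟩, ⟨2 * b, by rw [hb]; push_cast; ring⟩⟩
  intro n hn
  induction n, hn using Nat.le_induction with
  | base =>
    intro k
    by_cases hk : k = 0
    · subst hk
      exact ⟨⟨1, by rw [hξ10]; norm_num⟩, ⟨0, by rw [hζ1]; norm_num⟩,
        fun h => absurd h (by norm_num), fun _ => hζ1 0⟩
    · exact ⟨⟨0, by rw [hξ1 k hk]; norm_num⟩, ⟨0, by rw [hζ1 k]; norm_num⟩,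
        fun _ => hξ1 k hk, fun _ => hζ1 k⟩
  | succ n hn IH =>
    intro k
    obtain ⟨hξk, hζk⟩ := hrec n hn k
    by_cases hk : k < 0
    · obtain ⟨h1, h2⟩ := hneg (n + 1) k hk
      exact ⟨⟨0, by rw [h1]; norm_num⟩, ⟨0, by rw [h2]; norm_num⟩,
        fun _ => h1, fun _ => h2⟩
    push_neg at hk
    obtain ⟨⟨a1, ha1⟩, ⟨b1, hb1⟩, hx1, hz1⟩ := IH k
    obtain ⟨⟨a2, ha2⟩, ⟨b2, hb2⟩, hx2, hz2⟩ := IH (k - 1)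
    refine ⟨?_, ?_, ?_, ?_⟩
    · -- ξ (n+1) k is a natural number
      by_cases h : 2 * k ≤ (n : ℤ) + 1
      · refine ⟨(1 + 2 * k).toNat * a1 + ((n : ℤ) + 1 - 2 * k).toNat * a2 + b2, ?_⟩
        have e1 : (((1 + 2 * k).toNat : ℕ) : ℚ) = 1 + 2 * (k : ℚ) := by
          have h0 : (0 : ℤ) ≤ 1 + 2 * k := by omega
          rw [show (((1 + 2 * k).toNat : ℕ) : ℚ) = (((1 + 2 * k).toNat : ℤ) : ℚ) from by
            push_cast; ring, Int.toNat_of_nonneg h0]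
          push_cast; ring
        have e2 : ((((n : ℤ) + 1 - 2 * k).toNat : ℕ) : ℚ) = (n : ℚ) + 1 - 2 * (k : ℚ) := by
          have h0 : (0 : ℤ) ≤ (n : ℤ) + 1 - 2 * k := by omega
          rw [show ((((n : ℤ) + 1 - 2 * k).toNat : ℕ) : ℚ)
              = ((((n : ℤ) + 1 - 2 * k).toNat : ℤ) : ℚ) from by push_cast; ring,
            Int.toNat_of_nonneg h0]
          push_cast; ring
        rw [hξk, ha1, ha2, hb2]
        push_cast [e1, e2]
        ring
      · push_neg at h
        refine ⟨0, ?_⟩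
        rw [hξk, hx1 (by omega), hx2 (by omega), hz2 (by omega)]
        norm_num
    · -- ζ (n+1) k is twice a natural number
      by_cases h : 2 * k ≤ (n : ℤ)
      · refine ⟨(1 + k).toNat * 2 * b1 + ((n : ℤ) - 2 * k).toNat * b2 + a1, ?_⟩
        have e1 : (((1 + k).toNat : ℕ) : ℚ) = 1 + (k : ℚ) := by
          have h0 : (0 : ℤ) ≤ 1 + k := by omega
          rw [show (((1 + k).toNat : ℕ) : ℚ) = (((1 + k).toNat : ℤ) : ℚ) from by
            push_cast; ring, Int.toNat_of_nonneg h0]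
          push_cast; ring
        have e2 : ((((n : ℤ) - 2 * k).toNat : ℕ) : ℚ) = (n : ℚ) - 2 * (k : ℚ) := by
          have h0 : (0 : ℤ) ≤ (n : ℤ) - 2 * k := by omega
          rw [show ((((n : ℤ) - 2 * k).toNat : ℕ) : ℚ)
              = ((((n : ℤ) - 2 * k).toNat : ℤ) : ℚ) from by push_cast; ring,
            Int.toNat_of_nonneg h0]
          push_cast; ring
        rw [hζk, hb1, hb2, ha1]
        push_cast [e1, e2]
        ring
      · push_neg at h
        refine ⟨0, ?_⟩
        rw [hζk, hz1 (by omega), hz2 (by omega), hx1 (by omega)]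
        norm_num
    · -- vanishing of ξ (n+1) k for 2k ≥ n+1
      intro hbig
      push_cast at hbig
      have hmid : ((n : ℚ) - 2 * (k : ℚ) + 1) * ξ n (k - 1) = 0 := by
        rcases eq_or_lt_of_le hbig with heq | hlt
        · have hq : (n : ℚ) - 2 * (k : ℚ) + 1 = 0 := by
            have : ((n : ℤ) : ℚ) + 1 = 2 * ((k : ℤ) : ℚ) := by exact_mod_cast heq
            push_cast at this; linarith
          rw [hq, zero_mul]
        · rw [hx2 (by omega), mul_zero]
      rw [hξk, hx1 (by omega), hz2 (by omega), hmid]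
      norm_num
    · -- vanishing of ζ (n+1) k for 2k ≥ n
      intro hbig
      have hbig' : (n : ℤ) ≤ 2 * k := by push_cast at hbig; omega
      have hmid : ((n : ℚ) - 2 * (k : ℚ)) * ζ n (k - 1) = 0 := by
        rcases eq_or_lt_of_le hbig' with heq | hlt
        · have hq : (n : ℚ) - 2 * (k : ℚ) = 0 := by
            have : ((n : ℤ) : ℚ) = 2 * ((k : ℤ) : ℚ) := by exact_mod_cast heq
            push_cast at this; linarith
          rw [hq, zero_mul]
        · rw [hz2 (by omega), mul_zero]
      rw [hζk, hz1 (by omega), hx1 hbig', hmid]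
      norm_num
end

section
/- For all n ≥ 2, the bivariate polynomial b_n(x,y) = Σ_{π ∈ S_n^B} x^{des_A(π)} y^{des_B(π)} satisfies b_n(x,y) = (1+y)·Σ_{k≥0} 4^k T(n,2k+1) (xy)^k (1+xy)^{n-1-2k} + y(1+x)·Σ_{k≥0} 2·4^k T(n,2k+2) (xy)^k (1+xy)^{n-2-2k}, where T(n,j) is the number of permutations in S_n with exactly j up-down runs. -/
/-- The number of up-down runs of `σ ∈ S_n`: the number of maximal monotone
consecutive subsequences of `0 σ(1) σ(2) ⋯ σ(n)`; equivalently, for `n ≥ 1`,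
one plus the number of interior turning points (peaks or valleys) of that word. -/
def udrun (n : ℕ) (σ : Equiv.Perm (Fin n)) : ℕ :=
  if n = 0 then 0 else
    1 + ((Finset.Icc 2 n).filter fun i =>
      (pEnt n σ (i - 2) < pEnt n σ (i - 1) ∧ pEnt n σ i < pEnt n σ (i - 1)) ∨
      (pEnt n σ (i - 1) < pEnt n σ (i - 2) ∧ pEnt n σ (i - 1) < pEnt n σ i)).card

/-- `T n j` is the number of permutations in `S_n` with exactly `j` up-down runs. -/
def udrunCount (n j : ℕ) : ℕ :=
  (Finset.univ.filter fun σ : Equiv.Perm (Fin n) => udrun n σ = j).card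


namespace BnAux
open Finset

lemma pEnt_zero (n : ℕ) (σ : Equiv.Perm (Fin n)) : pEnt n σ 0 = 0 := by
  simp [pEnt]

lemma pEnt_pos (n : ℕ) (σ : Equiv.Perm (Fin n)) {i : ℕ} (h1 : 1 ≤ i) (h2 : i ≤ n) :
    1 ≤ pEnt n σ i := by
  rw [pEnt, dif_pos ⟨h1, h2⟩]; omega

lemma pEnt_ne (n : ℕ) (σ : Equiv.Perm (Fin n)) {i j : ℕ} (hi : 1 ≤ i) (hi2 : i ≤ n)
    (hj : 1 ≤ j) (hj2 : j ≤ n) (hij : i ≠ j) : pEnt n σ i ≠ pEnt n σ j := by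
  rw [pEnt, dif_pos ⟨hi, hi2⟩, pEnt, dif_pos ⟨hj, hj2⟩]
  intro h
  have h2 : σ ⟨i-1, by omega⟩ = σ ⟨j-1, by omega⟩ := by
    apply Fin.val_injective; omega
  have h3 := σ.injective h2
  have h4 : i - 1 = j - 1 := congrArg Fin.val h3
  omega

/-- whether a signed pair (a = sign of left, b = sign of right, d = descent of
underlying values) produces a descent. Sign `true` = negative. -/
def dsc (a b d : Bool) : Bool := if a then (b && !d) else (b || d)

/-- sign vector as 1-based function -/
def eps (n : ℕ) (ε : Fin n → Bool) (i : ℕ) : Bool :=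
  if h : 1 ≤ i ∧ i ≤ n then ε ⟨i - 1, by omega⟩ else false

/-- descent of σ at position i -/
def cdes (n : ℕ) (σ : Equiv.Perm (Fin n)) (i : ℕ) : Bool :=
  decide (pEnt n σ (i+1) < pEnt n σ i)

/-- number of signed descents among the first m positions -/
def dA (n m : ℕ) (σ : Equiv.Perm (Fin n)) (ε : Fin n → Bool) : ℕ :=
  ((Finset.Icc 1 (m-1)).filter fun i =>
    dsc (eps n ε i) (eps n ε (i+1)) (cdes n σ i) = true).card

/-- number of descending runs within the first m positions -/
def dPre (n m : ℕ) (σ : Equiv.Perm (Fin n)) : ℕ :=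
  ((Finset.Icc 1 (m-1)).filter fun i =>
    pEnt n σ (i+1) < pEnt n σ i ∧ pEnt n σ (i-1) < pEnt n σ i).card

/-- number of turning points within the first m positions -/
def tPre (n m : ℕ) (σ : Equiv.Perm (Fin n)) : ℕ :=
  ((Finset.Icc 2 m).filter fun i =>
      (pEnt n σ (i - 2) < pEnt n σ (i - 1) ∧ pEnt n σ i < pEnt n σ (i - 1)) ∨
      (pEnt n σ (i - 1) < pEnt n σ (i - 2) ∧ pEnt n σ (i - 1) < pEnt n σ i)).card

/-- partial signed sums, split according to the sign at position m -/
def SB (n m : ℕ) (σ : Equiv.Perm (Fin n)) (t y : ℚ) (b : Bool) : ℚ :=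
  ∑ ε ∈ Finset.univ.filter fun ε : Fin n → Bool => eps n ε m = b,
    t ^ dA n m σ ε * y ^ (if eps n ε 1 = true then 1 else 0)

/-- target value as a function of the number of up-down runs -/
def gfun (n : ℕ) (x y : ℚ) (j : ℕ) : ℚ :=
  if j % 2 = 1 then (1+y) * 4^((j-1)/2) * (x*y)^((j-1)/2) * (1+x*y)^(n-j)
  else y*(1+x) * 2 * 4^(j/2-1) * (x*y)^(j/2-1) * (1+x*y)^(n-j)


lemma Icc_succ_split (m : ℕ) (hm : 1 ≤ m) :
    Finset.Icc 1 m = insert m (Finset.Icc 1 (m-1)) := by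
  ext i; simp only [Finset.mem_Icc, Finset.mem_insert]; omega

lemma dA_succ (n m : ℕ) (σ : Equiv.Perm (Fin n)) (ε : Fin n → Bool) (hm : 1 ≤ m) :
    dA n (m+1) σ ε = dA n m σ ε +
      (if dsc (eps n ε m) (eps n ε (m+1)) (cdes n σ m) = true then 1 else 0) := by
  unfold dA
  rw [show m+1-1 = m from rfl, Icc_succ_split m hm, Finset.filter_insert]
  have hnot : m ∉ Finset.Icc 1 (m-1) := by simp [Finset.mem_Icc]; omega
  split
  · rw [Finset.card_insert_of_notMem (fun h => hnot (Finset.mem_of_mem_filter _ h))]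
  · omega

lemma eps_update_ne (n : ℕ) (ε : Fin n → Bool) (p : Fin n) (v : Bool) (i : ℕ)
    (h : i ≠ p.val + 1) : eps n (Function.update ε p v) i = eps n ε i := by
  unfold eps
  split
  · next hh =>
    rw [Function.update_of_ne]
    intro hc
    have : i - 1 = p.val := congrArg Fin.val hc
    omega
  · rfl

lemma eps_update_self (n : ℕ) (ε : Fin n → Bool) (p : Fin n) (v : Bool) :
    eps n (Function.update ε p v) (p.val + 1) = v := by
  unfold eps
  rw [dif_pos ⟨by omega, by omega⟩]
  have : (⟨p.val + 1 - 1, by omega⟩ : Fin n) = p := by ext; simp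
  rw [this, Function.update_self]

lemma eps_pos (n : ℕ) (ε : Fin n → Bool) (i : ℕ) (h1 : 1 ≤ i) (h2 : i ≤ n) :
    eps n ε i = ε ⟨i - 1, by omega⟩ := by
  unfold eps; rw [dif_pos ⟨h1, h2⟩]

lemma dA_update (n m : ℕ) (σ : Equiv.Perm (Fin n)) (ε : Fin n → Bool) (hmn : m < n)
    (v : Bool) : dA n m σ (Function.update ε ⟨m, hmn⟩ v) = dA n m σ ε := by
  unfold dA
  congr 1
  apply Finset.filter_congr
  intro i hi
  simp only [Finset.mem_Icc] at hi
  rw [eps_update_ne n ε _ v i (by show i ≠ m+1; omega), eps_update_ne n ε _ v (i+1) (by show i+1 ≠ m+1; omega)]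

/-- flipping the sign at position `m+1` matches the two halves -/
lemma half (n m : ℕ) (σ : Equiv.Perm (Fin n)) (t y : ℚ) (hm : 1 ≤ m) (hmn : m < n)
    (a b : Bool) :
    ∑ ε ∈ Finset.univ.filter
        (fun ε : Fin n → Bool => eps n ε (m+1) = b ∧ eps n ε m = a),
      t ^ dA n m σ ε * y ^ (if eps n ε 1 = true then 1 else 0)
  = ∑ ε ∈ Finset.univ.filter
        (fun ε : Fin n → Bool => eps n ε (m+1) = !b ∧ eps n ε m = a),
      t ^ dA n m σ ε * y ^ (if eps n ε 1 = true then 1 else 0) := by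
  have key : ∀ (c : Bool) (ε : Fin n → Bool), eps n ε (m+1) = c →
      eps n (Function.update ε ⟨m, hmn⟩ (!(ε ⟨m, hmn⟩))) (m+1) = !c := by
    intro c ε hc
    have : eps n ε (m+1) = ε ⟨m, hmn⟩ := eps_pos n ε (m+1) (by omega) (by omega)
    rw [show ((⟨m, hmn⟩ : Fin n) : ℕ) + 1 = m + 1 from rfl] at *
    rw [eps_update_self n ε ⟨m, hmn⟩]
    rw [this] at hc; rw [hc]
  apply Finset.sum_nbij'
    (i := fun ε => Function.update ε ⟨m, hmn⟩ (!(ε ⟨m, hmn⟩)))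
    (j := fun ε => Function.update ε ⟨m, hmn⟩ (!(ε ⟨m, hmn⟩)))
  · intro ε hε
    simp only [Finset.mem_filter, Finset.mem_univ, true_and] at hε ⊢
    exact ⟨key b ε hε.1, by rw [eps_update_ne n ε _ _ m (by show m ≠ m+1; omega)]; exact hε.2⟩
  · intro ε hε
    simp only [Finset.mem_filter, Finset.mem_univ, true_and] at hε ⊢
    constructor
    · have := key (!b) ε hε.1; rwa [Bool.not_not] at this
    · rw [eps_update_ne n ε _ _ m (by show m ≠ m+1; omega)]; exact hε.2
  · intro ε _
    simp [Function.update_idem, Function.update_self, Function.update_eq_self]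
  · intro ε _
    simp [Function.update_idem, Function.update_self, Function.update_eq_self]
  · intro ε _
    rw [dA_update n m σ ε hmn, eps_update_ne n ε _ _ 1 (by show (1:ℕ) ≠ m+1; omega)]

lemma SB_split (n m : ℕ) (σ : Equiv.Perm (Fin n)) (t y : ℚ) (hm : 1 ≤ m) (hmn : m < n)
    (a b : Bool) :
    SB n m σ t y a = 2 * ∑ ε ∈ Finset.univ.filter
        (fun ε : Fin n → Bool => eps n ε (m+1) = b ∧ eps n ε m = a),
      t ^ dA n m σ ε * y ^ (if eps n ε 1 = true then 1 else 0) := by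
  unfold SB
  rw [← Finset.sum_filter_add_sum_filter_not
    (Finset.univ.filter fun ε : Fin n → Bool => eps n ε m = a)
    (fun ε => eps n ε (m+1) = b)]
  rw [Finset.filter_filter, Finset.filter_filter]
  have e1 : Finset.univ.filter (fun ε : Fin n → Bool => eps n ε m = a ∧ eps n ε (m+1) = b)
      = Finset.univ.filter (fun ε : Fin n → Bool => eps n ε (m+1) = b ∧ eps n ε m = a) := by
    apply Finset.filter_congr; intro ε _; constructor <;> (intro h; exact ⟨h.2, h.1⟩)
  have e2 : Finset.univ.filter
        (fun ε : Fin n → Bool => eps n ε m = a ∧ ¬(eps n ε (m+1) = b))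
      = Finset.univ.filter
        (fun ε : Fin n → Bool => eps n ε (m+1) = !b ∧ eps n ε m = a) := by
    apply Finset.filter_congr; intro ε _
    constructor
    · intro h; exact ⟨by cases hb : eps n ε (m+1) <;> cases b <;> simp_all, h.1⟩
    · intro h; refine ⟨h.2, ?_⟩; rw [h.1]; cases b <;> simp
  rw [e1, e2, ← half n m σ t y hm hmn a b]
  ring

lemma card_eps_filter (n : ℕ) (hn : 1 ≤ n) (b : Bool) :
    (Finset.univ.filter fun ε : Fin n → Bool => eps n ε 1 = b).card = 2^(n-1) := by
  have p0 : Fin n := ⟨0, by omega⟩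
  have heq : ∀ c : Bool, ∀ ε : Fin n → Bool, eps n ε 1 = ε ⟨0, by omega⟩ := by
    intro c ε; exact eps_pos n ε 1 (le_refl 1) hn
  have hbij : (Finset.univ.filter fun ε : Fin n → Bool => eps n ε 1 = b).card
      = (Finset.univ.filter fun ε : Fin n → Bool => eps n ε 1 = !b).card := by
    apply Finset.card_nbij'
      (i := fun ε => Function.update ε ⟨0, by omega⟩ (!(ε ⟨0, by omega⟩)))
      (j := fun ε => Function.update ε ⟨0, by omega⟩ (!(ε ⟨0, by omega⟩)))
    · intro ε hε
      simp only [Finset.mem_coe, Finset.mem_filter, Finset.mem_univ, true_and] at hε ⊢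
      rw [heq b] at hε ⊢
      simp [hε]
    · intro ε hε
      simp only [Finset.mem_coe, Finset.mem_filter, Finset.mem_univ, true_and] at hε ⊢
      rw [heq b] at hε ⊢
      simp [hε]
    · intro ε _
      simp [Function.update_idem, Function.update_self, Function.update_eq_self]
    · intro ε _
      simp [Function.update_idem, Function.update_self, Function.update_eq_self]
  have hpart := Finset.card_filter_add_card_filter_not
    (s := (Finset.univ : Finset (Fin n → Bool))) (p := fun ε => eps n ε 1 = b)
  have hcongr : (Finset.univ.filter fun ε : Fin n → Bool => ¬(eps n ε 1 = b))
      = (Finset.univ.filter fun ε : Fin n → Bool => eps n ε 1 = !b) := by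
    apply Finset.filter_congr; intro ε _
    cases hb : eps n ε 1 <;> cases b <;> simp_all
  rw [hcongr] at hpart
  have hcard : (Finset.univ : Finset (Fin n → Bool)).card = 2^n := by
    simp [Finset.card_univ]
  have hpow : 2^n = 2 * 2^(n-1) := by
    rw [← pow_succ']; congr 1; omega
  omega

lemma SB_base (n : ℕ) (σ : Equiv.Perm (Fin n)) (t y : ℚ) (hn : 1 ≤ n) (b : Bool) :
    SB n 1 σ t y b = 2^(n-1) * y ^ (if b = true then 1 else 0) := by
  unfold SB
  have hdA : ∀ ε : Fin n → Bool, dA n 1 σ ε = 0 := by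
    intro ε; unfold dA; simp
  rw [Finset.sum_congr rfl (fun ε hε => by
    simp only [Finset.mem_filter, Finset.mem_univ, true_and] at hε
    rw [hdA ε, hε, pow_zero, one_mul])]
  rw [Finset.sum_const, card_eps_filter n hn b, nsmul_eq_mul]
  push_cast
  ring

lemma SB_step (n m : ℕ) (σ : Equiv.Perm (Fin n)) (t y : ℚ) (hm : 1 ≤ m) (hmn : m < n)
    (b : Bool) :
    2 * SB n (m+1) σ t y b
      = t ^ (if dsc false b (cdes n σ m) = true then 1 else 0) * SB n m σ t y false
      + t ^ (if dsc true b (cdes n σ m) = true then 1 else 0) * SB n m σ t y true := by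
  have hpart : ∀ a : Bool,
      (∑ ε ∈ Finset.univ.filter
          (fun ε : Fin n → Bool => eps n ε (m+1) = b ∧ eps n ε m = a),
        t ^ dA n (m+1) σ ε * y ^ (if eps n ε 1 = true then 1 else 0))
      = t ^ (if dsc a b (cdes n σ m) = true then 1 else 0) *
        ∑ ε ∈ Finset.univ.filter
          (fun ε : Fin n → Bool => eps n ε (m+1) = b ∧ eps n ε m = a),
        t ^ dA n m σ ε * y ^ (if eps n ε 1 = true then 1 else 0) := by
    intro a
    rw [Finset.mul_sum]
    apply Finset.sum_congr rfl
    intro ε hε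
    simp only [Finset.mem_filter, Finset.mem_univ, true_and] at hε
    rw [dA_succ n m σ ε hm, hε.1, hε.2, pow_add]
    ring
  have hsplit : SB n (m+1) σ t y b
      = (∑ ε ∈ Finset.univ.filter
          (fun ε : Fin n → Bool => eps n ε (m+1) = b ∧ eps n ε m = false),
        t ^ dA n (m+1) σ ε * y ^ (if eps n ε 1 = true then 1 else 0))
      + (∑ ε ∈ Finset.univ.filter
          (fun ε : Fin n → Bool => eps n ε (m+1) = b ∧ eps n ε m = true),
        t ^ dA n (m+1) σ ε * y ^ (if eps n ε 1 = true then 1 else 0)) := by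
    unfold SB
    rw [← Finset.sum_filter_add_sum_filter_not
      (Finset.univ.filter fun ε : Fin n → Bool => eps n ε (m+1) = b)
      (fun ε => eps n ε m = false)]
    rw [Finset.filter_filter, Finset.filter_filter]
    congr 1
    apply Finset.sum_congr _ (fun _ _ => rfl)
    apply Finset.filter_congr; intro ε _
    simp
  rw [hsplit, hpart false, hpart true,
    SB_split n m σ t y hm hmn false b, SB_split n m σ t y hm hmn true b]
  ring

lemma cdes_true_iff (n : ℕ) (σ : Equiv.Perm (Fin n)) (i : ℕ) :
    cdes n σ i = true ↔ pEnt n σ (i+1) < pEnt n σ i := by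
  simp [cdes]

lemma cdes_false_iff (n : ℕ) (σ : Equiv.Perm (Fin n)) (i : ℕ) :
    cdes n σ i = false ↔ ¬ pEnt n σ (i+1) < pEnt n σ i := by
  simp [cdes]

lemma dPre_base (n : ℕ) (σ : Equiv.Perm (Fin n)) (hn : 2 ≤ n) :
    dPre n 2 σ = if cdes n σ 1 = true then 1 else 0 := by
  have h0 : pEnt n σ 0 < pEnt n σ 1 := by
    rw [pEnt_zero]
    exact pEnt_pos n σ (le_refl 1) (by omega)
  unfold dPre
  rw [show (2:ℕ)-1 = 1 from rfl, Finset.Icc_self, Finset.filter_singleton]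
  by_cases hc : pEnt n σ 2 < pEnt n σ 1
  · rw [if_pos ⟨(by exact hc : pEnt n σ (1+1) < pEnt n σ 1), h0⟩,
      if_pos ((cdes_true_iff n σ 1).2 hc)]
    simp
  · rw [if_neg (fun h => hc h.1), if_neg (by simp [cdes]; omega)]
    simp

lemma dPre_succ (n m : ℕ) (σ : Equiv.Perm (Fin n)) (hm : 2 ≤ m) (hmn : m < n) :
    dPre n (m+1) σ = dPre n m σ +
      (if cdes n σ m = true ∧ cdes n σ (m-1) = false then 1 else 0) := by
  have hne : pEnt n σ (m-1) ≠ pEnt n σ m :=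
    pEnt_ne n σ (by omega) (by omega) (by omega) (by omega) (by omega)
  have hm1 : m - 1 + 1 = m := by omega
  unfold dPre
  rw [show m+1-1 = m from rfl, Icc_succ_split m (by omega), Finset.filter_insert]
  have hnot : m ∉ (Finset.Icc 1 (m-1)).filter
      (fun i => pEnt n σ (i+1) < pEnt n σ i ∧ pEnt n σ (i-1) < pEnt n σ i) := by
    intro h
    have := Finset.mem_of_mem_filter _ h
    simp [Finset.mem_Icc] at this; omega
  have hiff : (pEnt n σ (m+1) < pEnt n σ m ∧ pEnt n σ (m-1) < pEnt n σ m)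
      ↔ (cdes n σ m = true ∧ cdes n σ (m-1) = false) := by
    rw [cdes_true_iff, cdes_false_iff, hm1]
    constructor
    · intro h; exact ⟨h.1, by omega⟩
    · intro h; exact ⟨h.1, by omega⟩
  split
  · next h =>
    rw [Finset.card_insert_of_notMem hnot, if_pos (hiff.1 h)]
  · next h =>
    rw [if_neg (fun hh => h (hiff.2 hh))]
    omega

/-- initial factor of the closed form -/
def sfac (t y : ℚ) (s : Bool) : ℚ := if s then 2*(t+y) else (1+y)

lemma SB_invariant (n : ℕ) (σ : Equiv.Perm (Fin n)) (t y : ℚ) :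
    ∀ m, 2 ≤ m → m ≤ n →
    ∃ k j : ℕ,
      dPre n m σ = k + cond (cdes n σ 1) 1 0 ∧
      m + cond (cdes n σ (m-1)) 1 0 = 2 + cond (cdes n σ 1) 1 0 + 2*k + j ∧
      SB n m σ t y false
        = 2^(n-m) * (sfac t y (cdes n σ 1) / cond (cdes n σ (m-1)) 2 1)
          * 4^k * t^k * (1+t)^j ∧
      SB n m σ t y true = cond (cdes n σ (m-1)) 1 t * SB n m σ t y false := by
  intro m hm
  induction m, hm using Nat.le_induction with
  | base =>
    intro hn
    have h1n : 1 < n := by omega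
    have hbF := SB_step n 1 σ t y (le_refl 1) h1n false
    have hbT := SB_step n 1 σ t y (le_refl 1) h1n true
    rw [SB_base n σ t y (by omega) false, SB_base n σ t y (by omega) true] at hbF hbT
    rw [show (1:ℕ)+1 = 2 from rfl] at hbF hbT
    have hpow : (2:ℚ)^(n-1) = 2 * 2^(n-2) := by
      rw [← pow_succ']; congr 1; omega
    rw [show (2:ℕ)-1 = 1 from rfl]
    have hdb := dPre_base n σ (by omega)
    cases hs : cdes n σ 1 with
    | false =>
      rw [hs] at hbF hbT hdb
      norm_num [dsc] at hbF hbT hdb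
      simp only [Bool.cond_false]
      refine ⟨0, 0, by omega, by omega, ?_, ?_⟩
      · have h2 : 2 * SB n 2 σ t y false
            = 2 * (2^(n-2) * (sfac t y false / 1) * 4^0 * t^0 * (1+t)^0) := by
          rw [hbF, hpow]; simp only [sfac, Bool.false_eq_true, if_false]; ring
        linarith
      · have h2 : 2 * SB n 2 σ t y true = t * (2 * SB n 2 σ t y false) := by
          rw [hbT, hbF]; ring
        linear_combination h2 / 2
    | true =>
      rw [hs] at hbF hbT hdb
      norm_num [dsc] at hbF hbT hdb
      simp only [Bool.cond_true]
      refine ⟨0, 0, by omega, by omega, ?_, ?_⟩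
      · have h2 : 2 * SB n 2 σ t y false
            = 2 * (2^(n-2) * (sfac t y true / 2) * 4^0 * t^0 * (1+t)^0) := by
          rw [hbF, hpow]; simp only [sfac, if_true]; ring
        linarith
      · have h2 : 2 * SB n 2 σ t y true = 1 * (2 * SB n 2 σ t y false) := by
          rw [hbT, hbF]; ring
        linear_combination h2 / 2
  | succ m hm2 ih =>
    intro hmn1
    obtain ⟨k, j, hd, he, hF, hT⟩ := ih (by omega)
    have hmn : m < n := by omega
    have hstF := SB_step n m σ t y (by omega) hmn false
    have hstT := SB_step n m σ t y (by omega) hmn true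
    have hdsucc := dPre_succ n m σ hm2 hmn
    have hpow : (2:ℚ)^(n-m) = 2 * 2^(n-(m+1)) := by
      rw [← pow_succ']; congr 1; omega
    rw [show m+1-1 = m from rfl]
    cases hem : cdes n σ (m-1) <;> cases hc : cdes n σ m
    -- case em = false, c = false : k' = k, j' = j+1
    · rw [hem] at hT hF he
      rw [hc] at hstF hstT
      rw [hem, hc] at hdsucc
      norm_num [dsc] at hstF hstT hdsucc
      simp only [Bool.cond_false] at hT hF he ⊢
      have hvF : SB n (m+1) σ t y false
          = 2^(n-(m+1)) * (sfac t y (cdes n σ 1) / 1) * 4^k * t^k * (1+t)^(j+1) := by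
        have h2 : 2 * SB n (m+1) σ t y false
            = 2 * (2^(n-(m+1)) * (sfac t y (cdes n σ 1) / 1) * 4^k * t^k * (1+t)^(j+1)) := by
          rw [hstF, hT, hF, hpow]; ring
        linarith
      refine ⟨k, j+1, by omega, by omega, hvF, ?_⟩
      have h2 : 2 * SB n (m+1) σ t y true = t * (2 * SB n (m+1) σ t y false) := by
        rw [hstT, hstF, hT]; ring
      linear_combination h2 / 2
    -- case em = false, c = true : k' = k+1, j' = j
    · rw [hem] at hT hF he
      rw [hc] at hstF hstT
      rw [hem, hc] at hdsucc
      norm_num [dsc] at hstF hstT hdsucc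
      simp only [Bool.cond_false, Bool.cond_true] at hT hF he ⊢
      have hvF : SB n (m+1) σ t y false
          = 2^(n-(m+1)) * (sfac t y (cdes n σ 1) / 2) * 4^(k+1) * t^(k+1) * (1+t)^j := by
        have h2 : 2 * SB n (m+1) σ t y false
            = 2 * (2^(n-(m+1)) * (sfac t y (cdes n σ 1) / 2) * 4^(k+1) * t^(k+1) * (1+t)^j) := by
          rw [hstF, hT, hF, hpow]; ring
        linarith
      refine ⟨k+1, j, by omega, by omega, hvF, ?_⟩
      have h2 : 2 * SB n (m+1) σ t y true = 1 * (2 * SB n (m+1) σ t y false) := by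
        rw [hstT, hstF]; ring
      linear_combination h2 / 2
    -- case em = true, c = false : k' = k, j' = j
    · rw [hem] at hT hF he
      rw [hc] at hstF hstT
      rw [hem, hc] at hdsucc
      norm_num [dsc] at hstF hstT hdsucc
      simp only [Bool.cond_false, Bool.cond_true] at hT hF he ⊢
      have hvF : SB n (m+1) σ t y false
          = 2^(n-(m+1)) * (sfac t y (cdes n σ 1) / 1) * 4^k * t^k * (1+t)^j := by
        have h2 : 2 * SB n (m+1) σ t y false
            = 2 * (2^(n-(m+1)) * (sfac t y (cdes n σ 1) / 1) * 4^k * t^k * (1+t)^j) := by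
          rw [hstF, hT, hF, hpow]; ring
        linarith
      refine ⟨k, j, by omega, by omega, hvF, ?_⟩
      have h2 : 2 * SB n (m+1) σ t y true = t * (2 * SB n (m+1) σ t y false) := by
        rw [hstT, hstF, hT]; ring
      linear_combination h2 / 2
    -- case em = true, c = true : k' = k, j' = j+1
    · rw [hem] at hT hF he
      rw [hc] at hstF hstT
      rw [hem, hc] at hdsucc
      norm_num [dsc] at hstF hstT hdsucc
      simp only [Bool.cond_true] at hT hF he ⊢
      have hvF : SB n (m+1) σ t y false
          = 2^(n-(m+1)) * (sfac t y (cdes n σ 1) / 2) * 4^k * t^k * (1+t)^(j+1) := by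
        have h2 : 2 * SB n (m+1) σ t y false
            = 2 * (2^(n-(m+1)) * (sfac t y (cdes n σ 1) / 2) * 4^k * t^k * (1+t)^(j+1)) := by
          rw [hstF, hT, hF, hpow]; ring
        linarith
      refine ⟨k, j+1, by omega, by omega, hvF, ?_⟩
      have h2 : 2 * SB n (m+1) σ t y true = 1 * (2 * SB n (m+1) σ t y false) := by
        rw [hstT, hstF]; ring
      linear_combination h2 / 2


lemma pEnt_le (n : ℕ) (σ : Equiv.Perm (Fin n)) (i : ℕ) : pEnt n σ i ≤ n := by
  unfold pEnt
  split
  · next h => have := (σ ⟨i-1, by omega⟩).isLt; omega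
  · omega

lemma tPre_base (n : ℕ) (σ : Equiv.Perm (Fin n)) (hn : 2 ≤ n) :
    tPre n 2 σ = cond (cdes n σ 1) 1 0 := by
  have h0 : pEnt n σ 0 < pEnt n σ 1 := by
    rw [pEnt_zero]; exact pEnt_pos n σ (le_refl 1) (by omega)
  unfold tPre
  rw [Finset.Icc_self, Finset.filter_singleton]
  have hred : ((pEnt n σ (2-2) < pEnt n σ (2-1) ∧ pEnt n σ 2 < pEnt n σ (2-1)) ∨
      (pEnt n σ (2-1) < pEnt n σ (2-2) ∧ pEnt n σ (2-1) < pEnt n σ 2))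
      ↔ pEnt n σ 2 < pEnt n σ 1 := by
    rw [show (2:ℕ)-2 = 0 from rfl, show (2:ℕ)-1 = 1 from rfl]
    constructor
    · intro h; rcases h with ⟨_, h⟩ | ⟨h, _⟩
      · exact h
      · omega
    · intro h; exact Or.inl ⟨h0, h⟩
  by_cases hc : pEnt n σ 2 < pEnt n σ 1
  · rw [if_pos (hred.2 hc)]
    have : cdes n σ 1 = true := by rw [cdes_true_iff]; exact hc
    rw [this]; simp
  · rw [if_neg (fun h => hc (hred.1 h))]
    have : cdes n σ 1 = false := by rw [cdes_false_iff]; exact hc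
    rw [this]; simp

lemma Icc2_succ_split (m : ℕ) (hm : 2 ≤ m) :
    Finset.Icc 2 m = insert m (Finset.Icc 2 (m-1)) := by
  ext i; simp only [Finset.mem_Icc, Finset.mem_insert]; omega

lemma tPre_succ (n m : ℕ) (σ : Equiv.Perm (Fin n)) (hm : 2 ≤ m) (hmn : m < n) :
    tPre n (m+1) σ = tPre n m σ +
      (if cdes n σ m ≠ cdes n σ (m-1) then 1 else 0) := by
  have hne : pEnt n σ (m-1) ≠ pEnt n σ m :=
    pEnt_ne n σ (by omega) (by omega) (by omega) (by omega) (by omega)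
  have hne2 : pEnt n σ m ≠ pEnt n σ (m+1) :=
    pEnt_ne n σ (by omega) (by omega) (by omega) (by omega) (by omega)
  have hm1 : m - 1 + 1 = m := by omega
  unfold tPre
  rw [Icc2_succ_split (m+1) (by omega), show m+1-1 = m from rfl, Finset.filter_insert]
  have hnot : (m+1) ∉ (Finset.Icc 2 m).filter (fun i =>
      (pEnt n σ (i - 2) < pEnt n σ (i - 1) ∧ pEnt n σ i < pEnt n σ (i - 1)) ∨
      (pEnt n σ (i - 1) < pEnt n σ (i - 2) ∧ pEnt n σ (i - 1) < pEnt n σ i)) := by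
    intro h
    have := Finset.mem_of_mem_filter _ h
    rw [Finset.mem_Icc] at this
    omega
  have hiff : ((pEnt n σ (m+1-2) < pEnt n σ (m+1-1) ∧ pEnt n σ (m+1) < pEnt n σ (m+1-1)) ∨
      (pEnt n σ (m+1-1) < pEnt n σ (m+1-2) ∧ pEnt n σ (m+1-1) < pEnt n σ (m+1)))
      ↔ (cdes n σ m ≠ cdes n σ (m-1)) := by
    rw [show m+1-2 = m-1 by omega, show m+1-1 = m from rfl]
    rw [Ne, Bool.eq_iff_iff, cdes_true_iff, cdes_true_iff, hm1]
    constructor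
    · intro h; rcases h with ⟨h1, h2⟩ | ⟨h1, h2⟩ <;> omega
    · intro h
      by_cases hc : pEnt n σ (m+1) < pEnt n σ m
      · exact Or.inl ⟨by omega, hc⟩
      · exact Or.inr ⟨by omega, by omega⟩
  split
  · next h => rw [Finset.card_insert_of_notMem hnot, if_pos (hiff.1 h)]
  · next h => rw [if_neg (fun hh => h (hiff.2 hh))]; omega

lemma turns_eq (n : ℕ) (σ : Equiv.Perm (Fin n)) :
    ∀ m, 2 ≤ m → m ≤ n →
      tPre n m σ + cond (cdes n σ (m-1)) 1 0 = 2 * dPre n m σ := by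
  intro m hm
  induction m, hm using Nat.le_induction with
  | base =>
    intro hn
    rw [tPre_base n σ hn, dPre_base n σ hn, show (2:ℕ)-1 = 1 from rfl]
    cases cdes n σ 1 <;> simp
  | succ m hm2 ih =>
    intro hmn1
    have hrec := ih (by omega)
    rw [tPre_succ n m σ hm2 (by omega), dPre_succ n m σ hm2 (by omega),
      show m+1-1 = m from rfl]
    cases hem : cdes n σ (m-1) <;> cases hc : cdes n σ m <;>
      simp [hem, hc] at hrec ⊢ <;> omega

lemma udrun_eq (n : ℕ) (σ : Equiv.Perm (Fin n)) (hn : 1 ≤ n) :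
    udrun n σ = 1 + tPre n n σ := by
  unfold udrun tPre
  rw [if_neg (by omega)]

lemma udrun_main (n : ℕ) (σ : Equiv.Perm (Fin n)) (hn : 2 ≤ n) :
    udrun n σ + cond (cdes n σ (n-1)) 1 0 = 2 * dPre n n σ + 1 := by
  have := turns_eq n σ n hn (le_refl n)
  rw [udrun_eq n σ (by omega)]
  omega

lemma udrun_pos (n : ℕ) (σ : Equiv.Perm (Fin n)) (hn : 1 ≤ n) : 1 ≤ udrun n σ := by
  rw [udrun_eq n σ hn]; omega

lemma udrun_le (n : ℕ) (σ : Equiv.Perm (Fin n)) (hn : 1 ≤ n) : udrun n σ ≤ n := by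
  rw [udrun_eq n σ hn]
  have : tPre n n σ ≤ (Finset.Icc 2 n).card := Finset.card_filter_le _ _
  rw [Nat.card_Icc] at this
  omega


/-- reverse-complement of a permutation -/
def rho (n : ℕ) (σ : Equiv.Perm (Fin n)) : Equiv.Perm (Fin n) :=
  (Fin.revPerm.trans σ).trans Fin.revPerm

lemma rho_apply (n : ℕ) (σ : Equiv.Perm (Fin n)) (i : Fin n) :
    rho n σ i = (σ i.rev).rev := by
  simp [rho]

lemma rho_involutive (n : ℕ) : Function.Involutive (rho n) := by
  intro σ
  ext i
  simp [rho]

lemma pEnt_rho (n : ℕ) (σ : Equiv.Perm (Fin n)) (i : ℕ) (h1 : 1 ≤ i) (h2 : i ≤ n) :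
    pEnt n (rho n σ) i = n + 1 - pEnt n σ (n+1-i) := by
  unfold pEnt
  rw [dif_pos ⟨h1, h2⟩, dif_pos ⟨(by omega : 1 ≤ n+1-i), (by omega : n+1-i ≤ n)⟩]
  have hidx : ((⟨i-1, by omega⟩ : Fin n).rev) = (⟨n+1-i-1, by omega⟩ : Fin n) := by
    ext
    rw [Fin.val_rev]
    simp
    omega
  have hv : ((rho n σ ⟨i-1, by omega⟩ : Fin n) : ℕ)
      = n - (((σ ⟨n+1-i-1, by omega⟩ : Fin n) : ℕ) + 1) := by
    rw [rho_apply, hidx, Fin.val_rev]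
  rw [hv]
  have := (σ (⟨n+1-i-1, by omega⟩ : Fin n)).isLt
  omega

lemma cdes_rho_one (n : ℕ) (σ : Equiv.Perm (Fin n)) (hn : 2 ≤ n) :
    cdes n (rho n σ) 1 = cdes n σ (n-1) := by
  unfold cdes
  have e1 := pEnt_rho n σ 1 (by omega) (by omega)
  have e2 := pEnt_rho n σ 2 (by omega) (by omega)
  rw [show n+1-1 = n by omega] at e1
  rw [show n+1-2 = n-1 by omega] at e2
  rw [show (1:ℕ)+1 = 2 from rfl, e1, e2, show n-1+1 = n by omega]
  have b1 : 1 ≤ pEnt n σ n := pEnt_pos n σ (by omega) (by omega)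
  have b2 : 1 ≤ pEnt n σ (n-1) := pEnt_pos n σ (by omega) (by omega)
  have c1 : pEnt n σ n ≤ n := pEnt_le n σ n
  have c2 : pEnt n σ (n-1) ≤ n := pEnt_le n σ (n-1)
  rw [decide_eq_decide]
  omega

lemma tPre_split (n : ℕ) (τ : Equiv.Perm (Fin n)) (hn : 2 ≤ n) :
    tPre n n τ = (cond (cdes n τ 1) 1 0) + ((Finset.Icc 3 n).filter (fun i =>
      (pEnt n τ (i - 2) < pEnt n τ (i - 1) ∧ pEnt n τ i < pEnt n τ (i - 1)) ∨
      (pEnt n τ (i - 1) < pEnt n τ (i - 2) ∧ pEnt n τ (i - 1) < pEnt n τ i))).card := by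
  have h0 : pEnt n τ 0 < pEnt n τ 1 := by
    rw [pEnt_zero]; exact pEnt_pos n τ (le_refl 1) (by omega)
  unfold tPre
  have hins : Finset.Icc 2 n = insert 2 (Finset.Icc 3 n) := by
    ext i; simp only [Finset.mem_Icc, Finset.mem_insert]; omega
  rw [hins, Finset.filter_insert]
  have hnot : (2:ℕ) ∉ (Finset.Icc 3 n).filter (fun i =>
      (pEnt n τ (i - 2) < pEnt n τ (i - 1) ∧ pEnt n τ i < pEnt n τ (i - 1)) ∨
      (pEnt n τ (i - 1) < pEnt n τ (i - 2) ∧ pEnt n τ (i - 1) < pEnt n τ i)) := by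
    intro h
    have := Finset.mem_of_mem_filter _ h
    rw [Finset.mem_Icc] at this
    omega
  have hred : ((pEnt n τ (2-2) < pEnt n τ (2-1) ∧ pEnt n τ 2 < pEnt n τ (2-1)) ∨
      (pEnt n τ (2-1) < pEnt n τ (2-2) ∧ pEnt n τ (2-1) < pEnt n τ 2))
      ↔ cdes n τ 1 = true := by
    rw [show (2:ℕ)-2 = 0 from rfl, show (2:ℕ)-1 = 1 from rfl, cdes_true_iff]
    constructor
    · intro h; rcases h with ⟨_, h⟩ | ⟨h, _⟩
      · exact h
      · omega
    · intro h; exact Or.inl ⟨h0, h⟩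
  split
  · next h =>
    rw [Finset.card_insert_of_notMem hnot]
    have : cdes n τ 1 = true := hred.1 h
    rw [this]
    simp [Nat.add_comm]
  · next h =>
    have : cdes n τ 1 = false := by
      cases hc : cdes n τ 1
      · rfl
      · exact absurd (hred.2 hc) h
    rw [this]
    simp

lemma turn_transport (n : ℕ) (σ : Equiv.Perm (Fin n)) (hn : 2 ≤ n) (i : ℕ)
    (h3 : 3 ≤ i) (hi : i ≤ n) :
    ((pEnt n (rho n σ) (i - 2) < pEnt n (rho n σ) (i - 1) ∧
        pEnt n (rho n σ) i < pEnt n (rho n σ) (i - 1)) ∨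
      (pEnt n (rho n σ) (i - 1) < pEnt n (rho n σ) (i - 2) ∧
        pEnt n (rho n σ) (i - 1) < pEnt n (rho n σ) i))
    ↔ ((pEnt n σ (n+3-i - 2) < pEnt n σ (n+3-i - 1) ∧
        pEnt n σ (n+3-i) < pEnt n σ (n+3-i - 1)) ∨
      (pEnt n σ (n+3-i - 1) < pEnt n σ (n+3-i - 2) ∧
        pEnt n σ (n+3-i - 1) < pEnt n σ (n+3-i))) := by
  have e2 := pEnt_rho n σ (i-2) (by omega) (by omega)
  have e1 := pEnt_rho n σ (i-1) (by omega) (by omega)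
  have e0 := pEnt_rho n σ i (by omega) (by omega)
  rw [show n+1-(i-2) = n+3-i by omega] at e2
  rw [show n+1-(i-1) = n+3-i-1 by omega] at e1
  rw [show n+1-i = n+3-i-2 by omega] at e0
  rw [e0, e1, e2]
  have b2 : 1 ≤ pEnt n σ (n+3-i) := pEnt_pos n σ (by omega) (by omega)
  have b1 : 1 ≤ pEnt n σ (n+3-i-1) := pEnt_pos n σ (by omega) (by omega)
  have b0 : 1 ≤ pEnt n σ (n+3-i-2) := pEnt_pos n σ (by omega) (by omega)
  have c2 : pEnt n σ (n+3-i) ≤ n := pEnt_le n σ _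
  have c1 : pEnt n σ (n+3-i-1) ≤ n := pEnt_le n σ _
  have c0 : pEnt n σ (n+3-i-2) ≤ n := pEnt_le n σ _
  omega

lemma udrun_rho (n : ℕ) (σ : Equiv.Perm (Fin n)) (hn : 2 ≤ n) :
    udrun n (rho n σ) = 2 * dPre n n σ + 1 - cond (cdes n σ 1) 1 0 := by
  have hσ := tPre_split n σ hn
  have hρ := tPre_split n (rho n σ) hn
  rw [cdes_rho_one n σ hn] at hρ
  have hbij : ((Finset.Icc 3 n).filter (fun i =>
      (pEnt n (rho n σ) (i - 2) < pEnt n (rho n σ) (i - 1) ∧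
        pEnt n (rho n σ) i < pEnt n (rho n σ) (i - 1)) ∨
      (pEnt n (rho n σ) (i - 1) < pEnt n (rho n σ) (i - 2) ∧
        pEnt n (rho n σ) (i - 1) < pEnt n (rho n σ) i))).card
      = ((Finset.Icc 3 n).filter (fun i =>
      (pEnt n σ (i - 2) < pEnt n σ (i - 1) ∧ pEnt n σ i < pEnt n σ (i - 1)) ∨
      (pEnt n σ (i - 1) < pEnt n σ (i - 2) ∧ pEnt n σ (i - 1) < pEnt n σ i))).card := by
    apply Finset.card_nbij' (i := fun i => n+3-i) (j := fun i => n+3-i)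
    · intro a ha
      simp only [Finset.mem_coe, Finset.mem_filter, Finset.mem_Icc] at ha ⊢
      obtain ⟨⟨ha3, han⟩, hp⟩ := ha
      exact ⟨⟨by omega, by omega⟩, (turn_transport n σ hn a ha3 han).1 hp⟩
    · intro a ha
      simp only [Finset.mem_coe, Finset.mem_filter, Finset.mem_Icc] at ha ⊢
      obtain ⟨⟨ha3, han⟩, hp⟩ := ha
      refine ⟨⟨by omega, by omega⟩, ?_⟩
      have haa : n+3-(n+3-a) = a := by omega
      exact (turn_transport n σ hn (n+3-a) (by omega) (by omega)).2 (by rw [haa]; exact hp)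
    · intro a ha
      simp only [Finset.mem_coe, Finset.mem_filter, Finset.mem_Icc] at ha
      dsimp only; omega
    · intro a ha
      simp only [Finset.mem_coe, Finset.mem_filter, Finset.mem_Icc] at ha
      dsimp only; omega
  rw [hbij] at hρ
  have hmain := turns_eq n σ n hn (le_refl n)
  rw [udrun_eq n (rho n σ) (by omega), hρ]
  omega


lemma gfun_odd (n : ℕ) (x y : ℚ) (d : ℕ) :
    gfun n x y (2*d+1) = (1+y) * 4^d * (x*y)^d * (1+x*y)^(n-(2*d+1)) := by
  unfold gfun
  rw [if_pos (by omega), show (2*d+1-1)/2 = d by omega]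

lemma gfun_even (n : ℕ) (x y : ℚ) (d : ℕ) (hd : 1 ≤ d) :
    gfun n x y (2*d) = y*(1+x) * 2 * 4^(d-1) * (x*y)^(d-1) * (1+x*y)^(n-2*d) := by
  unfold gfun
  rw [if_neg (by omega), show (2*d)/2 - 1 = d - 1 by omega]

lemma per_sigma (n : ℕ) (hn : 2 ≤ n) (σ : Equiv.Perm (Fin n)) (x y : ℚ) :
    (∑ ε : Fin n → Bool, (x*y) ^ dA n n σ ε * y ^ (if eps n ε 1 = true then 1 else 0))
      = gfun n x y (2 * dPre n n σ + 1 - cond (cdes n σ 1) 1 0) := by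
  obtain ⟨k, j, hd, he, hF, hT⟩ := SB_invariant n σ (x*y) y n hn (le_refl n)
  have hsplit : (∑ ε : Fin n → Bool,
        (x*y) ^ dA n n σ ε * y ^ (if eps n ε 1 = true then 1 else 0))
      = SB n n σ (x*y) y false + SB n n σ (x*y) y true := by
    unfold SB
    rw [← Finset.sum_filter_add_sum_filter_not Finset.univ
      (fun ε : Fin n → Bool => eps n ε n = false)]
    congr 1
    apply Finset.sum_congr _ (fun _ _ => rfl)
    apply Finset.filter_congr
    intro ε _
    simp
  rw [hsplit, hT, hF, show n - n = 0 by omega, pow_zero, one_mul]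
  cases hs : cdes n σ 1
  · rw [hs] at hd he
    simp only [Bool.cond_false, Nat.add_zero] at hd he ⊢
    rw [show 2 * dPre n n σ + 1 - 0 = 2*k+1 by omega, gfun_odd]
    cases hem : cdes n σ (n-1) <;> rw [hem] at he <;>
      simp only [Bool.cond_false, Bool.cond_true, sfac, hs, Bool.false_eq_true, if_false,
        Nat.add_zero] at he ⊢
    · rw [show n - (2*k+1) = j+1 by omega]
      ring
    · rw [show n - (2*k+1) = j by omega]
      ring
  · rw [hs] at hd he
    simp only [Bool.cond_true] at hd he ⊢
    rw [show 2 * dPre n n σ + 1 - 1 = 2*(k+1) by omega, gfun_even n x y (k+1) (by omega)]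
    rw [show k+1-1 = k by omega]
    cases hem : cdes n σ (n-1) <;> rw [hem] at he <;>
      simp only [Bool.cond_false, Bool.cond_true, sfac, hs, if_true,
        Nat.add_zero] at he ⊢
    · rw [show n - 2*(k+1) = j+1 by omega]
      ring
    · rw [show n - 2*(k+1) = j by omega]
      ring


lemma sEnt_val (n : ℕ) (σ : Equiv.Perm (Fin n)) (ε : Fin n → Bool) (i : ℕ)
    (h1 : 1 ≤ i) (h2 : i ≤ n) :
    sEnt n (σ, ε) i = cond (eps n ε i) (-(pEnt n σ i : ℤ)) (pEnt n σ i) := by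
  unfold sEnt eps pEnt
  rw [dif_pos ⟨h1,h2⟩, dif_pos ⟨h1,h2⟩, dif_pos ⟨h1,h2⟩]
  cases hb : ε ⟨i-1, by omega⟩ <;> simp [hb]

lemma sEnt_zero (n : ℕ) (σ : Equiv.Perm (Fin n)) (ε : Fin n → Bool) :
    sEnt n (σ, ε) 0 = 0 := by
  unfold sEnt
  rw [dif_neg (by omega)]

lemma sdes_iff (n : ℕ) (σ : Equiv.Perm (Fin n)) (ε : Fin n → Bool) (i : ℕ)
    (h1 : 1 ≤ i) (h2 : i + 1 ≤ n) :
    (sEnt n (σ, ε) (i+1) < sEnt n (σ, ε) i)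
      ↔ dsc (eps n ε i) (eps n ε (i+1)) (cdes n σ i) = true := by
  rw [sEnt_val n σ ε i h1 (by omega), sEnt_val n σ ε (i+1) (by omega) h2]
  have hp1 : 1 ≤ pEnt n σ i := pEnt_pos n σ h1 (by omega)
  have hp2 : 1 ≤ pEnt n σ (i+1) := pEnt_pos n σ (by omega) h2
  have hne : pEnt n σ i ≠ pEnt n σ (i+1) :=
    pEnt_ne n σ h1 (by omega) (by omega) h2 (by omega)
  cases ha : eps n ε i <;> cases hb : eps n ε (i+1) <;>
    first
      | (simp [dsc, cdes]; omega)
      | simp [dsc, cdes]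

lemma desA_eq (n : ℕ) (σ : Equiv.Perm (Fin n)) (ε : Fin n → Bool) :
    desA n (σ, ε) = dA n n σ ε := by
  unfold desA dA
  congr 1
  apply Finset.filter_congr
  intro i hi
  simp only [Finset.mem_Icc] at hi
  rw [sdes_iff n σ ε i (by omega) (by omega)]
  try simp

lemma desB_eq (n : ℕ) (hn : 1 ≤ n) (σ : Equiv.Perm (Fin n)) (ε : Fin n → Bool) :
    desB n (σ, ε) = desA n (σ, ε) + (if eps n ε 1 = true then 1 else 0) := by
  unfold desB desA
  have hins : Finset.range n = insert 0 (Finset.Icc 1 (n-1)) := by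
    ext i; simp only [Finset.mem_range, Finset.mem_insert, Finset.mem_Icc]; omega
  rw [hins, Finset.filter_insert]
  have hnot : (0:ℕ) ∉ (Finset.Icc 1 (n-1)).filter
      (fun i => sEnt n (σ, ε) (i+1) < sEnt n (σ, ε) i) := by
    intro h
    have := Finset.mem_of_mem_filter _ h
    rw [Finset.mem_Icc] at this
    omega
  have hcond : (sEnt n (σ, ε) (0+1) < sEnt n (σ, ε) 0) ↔ eps n ε 1 = true := by
    rw [sEnt_zero, sEnt_val n σ ε 1 (le_refl 1) hn]
    have hp1 : 1 ≤ pEnt n σ 1 := pEnt_pos n σ (le_refl 1) hn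
    cases hb : eps n ε 1 <;>
      first
        | (simp; omega)
        | simp
  split
  · next h =>
    rw [Finset.card_insert_of_notMem hnot, if_pos (hcond.1 h)]
    try omega
  · next h =>
    rw [if_neg (fun hh => h (hcond.2 hh))]
    omega

lemma sigma_sum (n : ℕ) (hn : 2 ≤ n) (σ : Equiv.Perm (Fin n)) (x y : ℚ) :
    (∑ ε : Fin n → Bool, x ^ desA n (σ, ε) * y ^ desB n (σ, ε))
      = gfun n x y (2 * dPre n n σ + 1 - cond (cdes n σ 1) 1 0) := by
  rw [← per_sigma n hn σ x y]
  apply Finset.sum_congr rfl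
  intro ε _
  rw [desB_eq n (by omega) σ ε, desA_eq n σ ε, pow_add, mul_pow]
  ring

lemma udrunCount_zero_of (n j : ℕ) (hn : 1 ≤ n) (h : j = 0 ∨ n < j) :
    udrunCount n j = 0 := by
  unfold udrunCount
  rw [Finset.card_eq_zero, Finset.filter_eq_empty_iff]
  intro σ _
  have h1 := udrun_pos n σ hn
  have h2 := udrun_le n σ hn
  omega

lemma sum_double (g : ℕ → ℚ) : ∀ N, (∑ i ∈ Finset.range (2*N), g i)
    = (∑ i ∈ Finset.range N, g (2*i)) + (∑ i ∈ Finset.range N, g (2*i+1)) := by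
  intro N
  induction N with
  | zero => simp
  | succ N ih =>
    rw [show 2*(N+1) = 2*N+1+1 by omega, Finset.sum_range_succ, Finset.sum_range_succ,
      ih, Finset.sum_range_succ, Finset.sum_range_succ]
    ring

end BnAux

theorem bn_expansion (n : ℕ) (hn : 2 ≤ n) (x y : ℚ) :
    ∑ π : SignedPerm n, x ^ desA n π * y ^ desB n π =
      (1 + y) * ∑ k ∈ Finset.range n,
          (4 : ℚ) ^ k * udrunCount n (2 * k + 1) * (x * y) ^ k *
            (1 + x * y) ^ (n - 1 - 2 * k)
      + y * (1 + x) * ∑ k ∈ Finset.range n,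
          2 * (4 : ℚ) ^ k * udrunCount n (2 * k + 2) * (x * y) ^ k *
            (1 + x * y) ^ (n - 2 - 2 * k) := by
  classical
  have h1 : (∑ π : SignedPerm n, x ^ desA n π * y ^ desB n π)
      = ∑ σ : Equiv.Perm (Fin n), ∑ ε : Fin n → Bool,
          x ^ desA n (σ, ε) * y ^ desB n (σ, ε) := Fintype.sum_prod_type _
  rw [h1]
  rw [Finset.sum_congr rfl (fun σ _ => by
    rw [BnAux.sigma_sum n hn σ x y, ← BnAux.udrun_rho n σ hn])]
  have h3 : (∑ σ : Equiv.Perm (Fin n), BnAux.gfun n x y (udrun n (BnAux.rho n σ)))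
      = ∑ σ : Equiv.Perm (Fin n), BnAux.gfun n x y (udrun n σ) :=
    Fintype.sum_bijective (BnAux.rho n) (BnAux.rho_involutive n).bijective _ _
      (fun σ => rfl)
  rw [h3]
  have h4 : (∑ σ : Equiv.Perm (Fin n), BnAux.gfun n x y (udrun n σ))
      = ∑ j ∈ Finset.range (n+1), (udrunCount n j : ℚ) * BnAux.gfun n x y j := by
    rw [← Finset.sum_fiberwise_of_maps_to (g := udrun n) (t := Finset.range (n+1))
      (fun σ _ => Finset.mem_range.2 (by
        have := BnAux.udrun_le n σ (by omega); omega))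
      (fun σ => BnAux.gfun n x y (udrun n σ))]
    apply Finset.sum_congr rfl
    intro j hj
    rw [Finset.sum_congr rfl (fun σ hσ => by
      rw [(Finset.mem_filter.1 hσ).2]), Finset.sum_const, nsmul_eq_mul]
    rfl
  rw [h4]
  set f : ℕ → ℚ := fun j => (udrunCount n j : ℚ) * BnAux.gfun n x y j with hf
  have hext : (∑ j ∈ Finset.range (n+1), f j) = ∑ j ∈ Finset.range (2*n+1), f j := by
    apply Finset.sum_subset
    · intro j hj
      simp only [Finset.mem_range] at *
      omega
    · intro j hj hnj
      simp only [Finset.mem_range] at hj hnj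
      rw [hf]
      simp only []
      rw [BnAux.udrunCount_zero_of n j (by omega) (by omega)]
      simp
  rw [hext, Finset.sum_range_succ', BnAux.sum_double (fun i => f (i+1)) n]
  have hz : f 0 = 0 := by
    rw [hf]
    simp only []
    rw [BnAux.udrunCount_zero_of n 0 (by omega) (Or.inl rfl)]
    simp
  rw [hz, add_zero, Finset.mul_sum, Finset.mul_sum]
  congr 1
  · apply Finset.sum_congr rfl
    intro k _
    rw [hf]
    simp only []
    rw [BnAux.gfun_odd n x y k, show n - (2*k+1) = n-1-2*k by omega]
    ring
  · apply Finset.sum_congr rfl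
    intro k _
    rw [hf]
    simp only []
    have hg : BnAux.gfun n x y (2*k+1+1)
        = y*(1+x) * 2 * 4^k * (x*y)^k * (1+x*y)^(n-2-2*k) := by
      rw [show 2*k+1+1 = 2*(k+1) by ring, BnAux.gfun_even n x y (k+1) (by omega),
        show k+1-1 = k by omega, show n - 2*(k+1) = n-2-2*k by omega]
    rw [hg, show 2*k+1+1 = 2*k+2 by ring]
    ring
end

section
/- Let C_n(x,y,z) = Σ_{σ ∈ Q_n} x^{asc(σ)} y^{plat(σ)} z^{des(σ)}, where asc, plat, des count ascents, plateaux, descents of a Stirling permutation with boundary σ_0 = σ_{2n+1} = 0. Then C_{n+1}(x,y,z) = xyz(∂/∂x + ∂/∂y + ∂/∂z) C_n(x,y,z) with C_1(x,y,z) = xyz. -/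
/-- Entry of `σ` in 1-based indexing, with the boundary convention
`σ_0 = 0` and `σ_i = 0` for `i > length σ`. -/
def ent (σ : List ℕ) (i : ℕ) : ℕ := if i = 0 then 0 else σ.getD (i - 1) 0

/-- Number of ascents: indices `1 ≤ i ≤ 2n` with `σ_{i-1} < σ_i`. -/
def ascQ (σ : List ℕ) : ℕ :=
  ((Finset.Icc 1 σ.length).filter fun i => ent σ (i - 1) < ent σ i).card

/-- Number of plateaux: indices `1 ≤ i ≤ 2n-1` with `σ_i = σ_{i+1}`. -/
def platQ (σ : List ℕ) : ℕ :=
  ((Finset.Icc 1 (σ.length - 1)).filter fun i => ent σ i = ent σ (i + 1)).card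

/-- Number of descents: indices `1 ≤ i ≤ 2n` with `σ_i > σ_{i+1}` (with `σ_{2n+1} = 0`). -/
def desQ (σ : List ℕ) : ℕ :=
  ((Finset.Icc 1 σ.length).filter fun i => ent σ (i + 1) < ent σ i).card


open MvPolynomial

/-- The trivariate second-order Eulerian polynomial
`C_n(x,y,z) = Σ_{σ ∈ Q_n} x^{asc σ} y^{plat σ} z^{des σ}`, with variables
`x = X 0`, `y = X 1`, `z = X 2`. -/
noncomputable def Cpoly (n : ℕ) : MvPolynomial (Fin 3) ℚ :=
  ∑ᶠ σ ∈ {σ : List ℕ | IsStirling n σ},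
    (X 0 : MvPolynomial (Fin 3) ℚ) ^ ascQ σ * X 1 ^ platQ σ * X 2 ^ desQ σ

/-- canonical Stirling permutation 1 1 2 2 ... n n -/
def canon : ℕ → List ℕ
  | 0 => []
  | n+1 => canon n ++ [n+1, n+1]

lemma canon_count (n m : ℕ) : (canon n).count m = if 1 ≤ m ∧ m ≤ n then 2 else 0 := by
  induction n with
  | zero => simp [canon]; intro _; omega
  | succ n ih =>
    simp only [canon, List.count_append, ih, List.count_cons, List.count_nil]
    split_ifs <;> simp_all <;> omega

lemma canon_length (n : ℕ) : (canon n).length = 2 * n := by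
  induction n with
  | zero => simp [canon]
  | succ n ih => simp [canon, ih]; omega

lemma stirling_perm {n σ} (h : IsStirling n σ) : σ.Perm (canon n) := by
  rw [List.perm_iff_count]
  intro a
  rw [h.1 a, canon_count]

lemma stirling_length {n σ} (h : IsStirling n σ) : σ.length = 2 * n :=
  (stirling_perm h).length_eq.trans (canon_length n)

lemma stirling_mem {n σ} (h : IsStirling n σ) {a : ℕ} (ha : a ∈ σ) : 1 ≤ a ∧ a ≤ n := by
  have := h.1 a
  have h2 := List.count_pos_iff.mpr ha
  by_contra hc
  rw [if_neg] at this <;> omega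

lemma getD_mem_or (σ : List ℕ) (k : ℕ) : σ.getD k 0 = 0 ∨ σ.getD k 0 ∈ σ := by
  by_cases h : k < σ.length
  · right; rw [List.getD_eq_getElem _ _ h]; exact List.getElem_mem _
  · left; exact List.getD_eq_default _ _ (le_of_not_gt h)

lemma ent_le {n σ} (h : IsStirling n σ) (i : ℕ) : ent σ i ≤ n := by
  unfold ent
  split
  · omega
  · rcases getD_mem_or σ (i-1) with h1 | h1
    · omega
    · exact (stirling_mem h h1).2

lemma ent_pos {n σ} (h : IsStirling n σ) {i : ℕ} (h1 : 1 ≤ i) (h2 : i ≤ σ.length) :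
    1 ≤ ent σ i := by
  unfold ent
  rw [if_neg (by omega)]
  rcases getD_mem_or σ (i-1) with hh | hh
  · have : i - 1 < σ.length := by omega
    rw [List.getD_eq_getElem _ _ this] at hh ⊢
    exfalso
    have := List.getElem_mem this
    have := stirling_mem h this
    omega
  · exact (stirling_mem h hh).1

lemma ent_oob {σ : List ℕ} {i : ℕ} (h : σ.length < i) : ent σ i = 0 := by
  unfold ent
  rw [if_neg (by omega)]
  exact List.getD_eq_default _ _ (by omega)

def ins (σ : List ℕ) (m j : ℕ) : List ℕ := σ.take j ++ m :: m :: σ.drop j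

lemma ins_length {σ : List ℕ} {j : ℕ} (hj : j ≤ σ.length) (m : ℕ) :
    (ins σ m j).length = σ.length + 2 := by
  simp [ins]; omega

lemma getD_take {σ : List ℕ} {k j : ℕ} (hk : k < j) : (σ.take j).getD k 0 = σ.getD k 0 := by
  simp [List.getD_eq_getElem?_getD, List.getElem?_take, hk]

lemma getD_drop (σ : List ℕ) (j k : ℕ) : (σ.drop j).getD k 0 = σ.getD (j + k) 0 := by
  simp [List.getD_eq_getElem?_getD, List.getElem?_drop]

lemma ent_ins_le {σ : List ℕ} {j : ℕ} (m : ℕ) (hj : j ≤ σ.length) {i : ℕ} (hi : i ≤ j) :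
    ent (ins σ m j) i = ent σ i := by
  unfold ent
  split
  · rfl
  · rename_i h0
    have h1 : i - 1 < (σ.take j).length := by
      rw [List.length_take]; omega
    rw [ins, List.getD_append _ _ _ _ h1, getD_take (by omega)]

lemma ent_ins_mid {σ : List ℕ} {j : ℕ} (m : ℕ) (hj : j ≤ σ.length) :
    ent (ins σ m j) (j + 1) = m ∧ ent (ins σ m j) (j + 2) = m := by
  have hl : (σ.take j).length = j := by rw [List.length_take]; omega
  constructor
  · unfold ent
    rw [if_neg (by omega), ins, List.getD_append_right _ _ _ _ (by omega), hl]
    simp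
  · unfold ent
    rw [if_neg (by omega), ins, List.getD_append_right _ _ _ _ (by omega), hl]
    have : j + 2 - 1 - j = 1 := by omega
    rw [this]
    simp

lemma ent_ins_ge {σ : List ℕ} {j : ℕ} (m : ℕ) (hj : j ≤ σ.length) (k : ℕ) :
    ent (ins σ m j) (j + 3 + k) = ent σ (j + 1 + k) := by
  have hl : (σ.take j).length = j := by rw [List.length_take]; omega
  unfold ent
  rw [if_neg (by omega), if_neg (by omega), ins,
    List.getD_append_right _ _ _ _ (by omega), hl]
  have : j + 3 + k - 1 - j = k + 2 := by omega
  rw [this]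
  show (σ.drop j).getD k 0 = σ.getD (j + 1 + k - 1) 0
  rw [getD_drop]
  congr 1
  omega

def gapA (σ : List ℕ) : Finset ℕ :=
  (Finset.range (σ.length + 1)).filter fun j => ent σ j < ent σ (j + 1)

def gapP (σ : List ℕ) : Finset ℕ :=
  (Finset.range (σ.length + 1)).filter fun j => ent σ j = ent σ (j + 1)

def gapD (σ : List ℕ) : Finset ℕ :=
  (Finset.range (σ.length + 1)).filter fun j => ent σ (j + 1) < ent σ j

lemma ascQ_eq_gapA (σ : List ℕ) : ascQ σ = (gapA σ).card := by
  unfold ascQ gapA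
  apply Finset.card_nbij' (fun i => i - 1) (fun j => j + 1)
  · intro i hi
    simp only [Finset.mem_coe, Finset.mem_filter, Finset.mem_Icc] at hi
    simp only [Finset.mem_coe, Finset.mem_filter, Finset.mem_range]
    have h1 : i - 1 + 1 = i := by omega
    rw [h1]
    exact ⟨by omega, hi.2⟩
  · intro j hj
    simp only [Finset.mem_coe, Finset.mem_filter, Finset.mem_range] at hj
    simp only [Finset.mem_coe, Finset.mem_filter, Finset.mem_Icc]
    have h0 : ent σ (σ.length + 1) = 0 := ent_oob (by omega)
    have hne : j ≠ σ.length := by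
      intro h; rw [h] at hj; omega
    exact ⟨⟨by omega, by omega⟩, by simpa using hj.2⟩
  · intro i hi
    simp only [Finset.mem_coe, Finset.mem_filter, Finset.mem_Icc] at hi
    beta_reduce; omega
  · intro j hj; beta_reduce; omega

lemma desQ_eq_gapD (σ : List ℕ) : desQ σ = (gapD σ).card := by
  unfold desQ gapD
  congr 1
  apply Finset.ext
  intro j
  simp only [Finset.mem_filter, Finset.mem_Icc, Finset.mem_range]
  constructor
  · rintro ⟨⟨h1, h2⟩, h3⟩; exact ⟨by omega, h3⟩
  · rintro ⟨h1, h2⟩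
    refine ⟨⟨?_, by omega⟩, h2⟩
    by_contra h
    have : j = 0 := by omega
    subst this
    simp [ent] at h2

lemma platQ_eq_gapP {n : ℕ} {σ : List ℕ} (h : IsStirling n σ) (hn : 1 ≤ n) :
    platQ σ = (gapP σ).card := by
  have hL : σ.length = 2 * n := stirling_length h
  have h0 : ent σ (σ.length + 1) = 0 := ent_oob (by omega)
  have h1 : 1 ≤ ent σ 1 := ent_pos h (by omega) (by omega)
  have h2 : 1 ≤ ent σ σ.length := ent_pos h (by omega) (by omega)
  unfold platQ gapP
  congr 1
  apply Finset.ext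
  intro j
  simp only [Finset.mem_filter, Finset.mem_Icc, Finset.mem_range]
  constructor
  · rintro ⟨⟨ha, hb⟩, hc⟩; exact ⟨by omega, hc⟩
  · rintro ⟨ha, hb⟩
    have hj0 : j ≠ 0 := by
      intro h'; subst h'
      have he : ent σ 0 = 0 := by simp [ent]
      simp only [Nat.zero_add] at hb
      omega
    have hjL : j ≠ σ.length := by
      intro h'; subst h'; omega
    exact ⟨⟨by omega, by omega⟩, hb⟩

lemma gap_split {M : Type*} [AddCommMonoid M] (σ : List ℕ) (f : ℕ → M) :
    ∑ j ∈ Finset.range (σ.length + 1), f j =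
      ∑ j ∈ gapA σ, f j + ∑ j ∈ gapP σ, f j + ∑ j ∈ gapD σ, f j := by
  unfold gapA gapP gapD
  rw [← Finset.sum_filter_add_sum_filter_not (Finset.range (σ.length + 1))
    (fun j => ent σ j < ent σ (j + 1)) f]
  rw [← Finset.sum_filter_add_sum_filter_not
    ((Finset.range (σ.length + 1)).filter fun j => ¬ ent σ j < ent σ (j + 1))
    (fun j => ent σ j = ent σ (j + 1)) f]
  rw [add_assoc]
  congr 1
  congr 1
  · apply Finset.sum_congr _ (fun _ _ => rfl)
    rw [Finset.filter_filter]
    apply Finset.filter_congr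
    intro x _
    constructor
    · rintro ⟨_, h⟩; exact h
    · intro h
      simp only [not_lt]
      exact ⟨le_of_eq h.symm, h⟩
  · apply Finset.sum_congr _ (fun _ _ => rfl)
    rw [Finset.filter_filter]
    apply Finset.filter_congr
    intro x _
    simp only [not_lt]
    constructor
    · rintro ⟨h1, h2⟩; omega
    · intro h; omega

lemma card_gap_ins (p : ℕ → ℕ → Prop) [∀ a b : ℕ, Decidable (p a b)]
    {σ : List ℕ} {j m : ℕ} (hj : j ≤ σ.length) :
    ((Finset.range ((ins σ m j).length + 1)).filter
        fun i => p (ent (ins σ m j) i) (ent (ins σ m j) (i + 1))).card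
      + (if p (ent σ j) (ent σ (j + 1)) then 1 else 0)
    = ((Finset.range (σ.length + 1)).filter fun i => p (ent σ i) (ent σ (i + 1))).card
      + ((if p (ent σ j) m then 1 else 0) + (if p m m then 1 else 0)
      + (if p m (ent σ (j + 1)) then 1 else 0)) := by
  set L := σ.length with hL
  set τ := ins σ m j with hτ
  set g : ℕ → ℕ := fun i => if p (ent τ i) (ent τ (i + 1)) then 1 else 0 with hg
  set f : ℕ → ℕ := fun i => if p (ent σ i) (ent σ (i + 1)) then 1 else 0 with hf
  have hLτ : τ.length = L + 2 := ins_length hj m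
  have key1 : ∀ k, ent τ (j + 3 + k) = ent σ (j + 1 + k) := ent_ins_ge m hj
  have key2 : ∀ i ≤ j, ent τ i = ent σ i := fun i hi => ent_ins_le m hj hi
  have key3 : ent τ (j + 1) = m := (ent_ins_mid m hj).1
  have key4 : ent τ (j + 2) = m := (ent_ins_mid m hj).2
  rw [Finset.card_filter, Finset.card_filter, hLτ]
  show (∑ i ∈ Finset.range (L + 2 + 1), g i) + _
      = (∑ i ∈ Finset.range (L + 1), f i) + _
  rw [Finset.range_eq_Ico, Finset.range_eq_Ico]
  rw [← Finset.sum_Ico_consecutive g (Nat.zero_le j) (by omega : j ≤ L + 2 + 1)]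
  rw [← Finset.sum_Ico_consecutive g (by omega : j ≤ j + 3) (by omega : j + 3 ≤ L + 2 + 1)]
  rw [← Finset.sum_Ico_consecutive f (Nat.zero_le j) (by omega : j ≤ L + 1)]
  rw [← Finset.sum_Ico_consecutive f (by omega : j ≤ j + 1) (by omega : j + 1 ≤ L + 1)]
  have e1 : ∑ i ∈ Finset.Ico 0 j, g i = ∑ i ∈ Finset.Ico 0 j, f i := by
    apply Finset.sum_congr rfl
    intro i hi
    simp only [Finset.mem_Ico] at hi
    simp only [hg, hf, key2 i (by omega), key2 (i + 1) (by omega)]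
  have e2 : ∑ i ∈ Finset.Ico j (j + 3), g i
      = (if p (ent σ j) m then 1 else 0) + (if p m m then 1 else 0)
        + (if p m (ent σ (j + 1)) then 1 else 0) := by
    rw [Finset.sum_Ico_eq_sum_range]
    have h3 : j + 3 - j = 3 := by omega
    rw [h3]
    rw [Finset.sum_range_succ, Finset.sum_range_succ, Finset.sum_range_succ,
      Finset.sum_range_zero]
    have g0 : g (j + 0) = if p (ent σ j) m then 1 else 0 := by
      simp only [hg, Nat.add_zero, key2 j le_rfl, key3]
    have g1 : g (j + 1) = if p m m then 1 else 0 := by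
      simp only [hg, key3, key4]
    have g2 : g (j + 2) = if p m (ent σ (j + 1)) then 1 else 0 := by
      have h30 : ent τ (j + 2 + 1) = ent σ (j + 1) := by
        have := key1 0
        simpa using this
      simp only [hg, key4, h30]
    rw [g0, g1, g2]
    omega
  have e3 : ∑ i ∈ Finset.Ico (j + 3) (L + 2 + 1), g i
      = ∑ i ∈ Finset.Ico (j + 1) (L + 1), f i := by
    rw [Finset.sum_Ico_eq_sum_range, Finset.sum_Ico_eq_sum_range]
    have h4 : L + 2 + 1 - (j + 3) = L + 1 - (j + 1) := by omega
    rw [h4]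
    apply Finset.sum_congr rfl
    intro k _
    have ha : ent τ (j + 3 + k) = ent σ (j + 1 + k) := key1 k
    have hb : ent τ (j + 3 + k + 1) = ent σ (j + 1 + k + 1) := by
      have := key1 (k + 1)
      have h5 : j + 3 + (k + 1) = j + 3 + k + 1 := by omega
      have h6 : j + 1 + (k + 1) = j + 1 + k + 1 := by omega
      rwa [h5, h6] at this
    simp only [hg, hf, ha, hb]
  have e4 : ∑ i ∈ Finset.Ico j (j + 1), f i = if p (ent σ j) (ent σ (j + 1)) then 1 else 0 := by
    rw [Finset.sum_Ico_eq_sum_range]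
    have h1 : j + 1 - j = 1 := by omega
    rw [h1, Finset.sum_range_succ, Finset.sum_range_zero]
    simp [hf]
  rw [e1, e2, e3, e4]
  omega

lemma ent_succ (l : List ℕ) (k : ℕ) : ent l (k + 1) = l.getD k 0 := by simp [ent]

lemma getD_ins {σ : List ℕ} {j : ℕ} (hj : j ≤ σ.length) (m k : ℕ) :
    (ins σ m j).getD k 0 =
      if k < j then σ.getD k 0 else if k < j + 2 then m else σ.getD (k - 2) 0 := by
  split_ifs with h1 h2
  · have := ent_ins_le m hj (show k + 1 ≤ j by omega)
    rwa [ent_succ, ent_succ] at this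
  · have hk : k = j ∨ k = j + 1 := by omega
    rcases hk with rfl | rfl
    · have := (ent_ins_mid m hj).1
      rwa [ent_succ] at this
    · have := (ent_ins_mid m hj).2
      rw [show j + 2 = (j + 1) + 1 from rfl, ent_succ] at this
      exact this
  · obtain ⟨t, rfl⟩ : ∃ t, k = j + 2 + t := ⟨k - j - 2, by omega⟩
    have := ent_ins_ge m hj t
    rw [show j + 3 + t = (j + 2 + t) + 1 by omega, show j + 1 + t = (j + t) + 1 by omega,
      ent_succ, ent_succ] at this
    rw [this]
    congr 1
    omega

lemma ins_stirling {n : ℕ} {σ : List ℕ} {j : ℕ} (h : IsStirling n σ) (hj : j ≤ σ.length) :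
    IsStirling (n + 1) (ins σ (n + 1) j) := by
  constructor
  · intro k
    have hc := h.1 k
    have hsplit : (σ.take j).count k + (σ.drop j).count k = σ.count k := by
      rw [← List.count_append, List.take_append_drop]
    simp only [ins, List.count_append, List.count_cons, List.count_nil]
    split_ifs at hc ⊢ <;> simp_all <;> omega
  · intro a s b has hsb hbL heq
    rw [ins_length hj] at hbL
    have hv : ∀ k, σ.getD k 0 ≤ n := by
      intro k
      rcases getD_mem_or σ k with h' | h'
      · omega
      · exact (stirling_mem h h').2
    simp only [getD_ins hj] at heq ⊢
    by_cases hbm : j ≤ b ∧ b < j + 2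
    · rw [if_neg (show ¬ b < j by omega), if_pos (show b < j + 2 by omega)] at heq
      have haj : j ≤ a ∧ a < j + 2 := by
        by_contra hc
        rcases Nat.lt_or_ge a j with h1 | h1
        · rw [if_pos h1] at heq; have := hv a; omega
        · rw [if_neg (show ¬ a < j by omega), if_neg (show ¬ a < j + 2 by omega)] at heq
          have := hv (a - 2); omega
      omega
    · by_cases hsm : j ≤ s ∧ s < j + 2
      · rw [if_neg (show ¬ s < j by omega), if_pos (show s < j + 2 by omega)]
        by_cases haj : a < j
        · rw [if_pos haj]; have := hv a; omega
        · rw [if_neg haj, if_pos (show a < j + 2 by omega)] at heq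
          rcases Nat.lt_or_ge b j with h1 | h1
          · rw [if_pos h1] at heq; have := hv b; omega
          · rw [if_neg (show ¬ b < j by omega), if_neg (show ¬ b < j + 2 by omega)] at heq
            have := hv (b - 2); omega
      · have ham : ¬ (j ≤ a ∧ a < j + 2) := by
          intro hc
          rw [if_neg (show ¬ a < j by omega), if_pos (show a < j + 2 by omega),
            if_neg (show ¬ b < j by omega), if_neg (show ¬ b < j + 2 by omega)] at heq
          have := hv (b - 2); omega
        rcases Nat.lt_or_ge a j with ha1 | ha1
        · rw [if_pos ha1] at heq ⊢
          rcases Nat.lt_or_ge s j with hs1 | hs1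
          · rw [if_pos hs1]
            rcases Nat.lt_or_ge b j with hb1 | hb1
            · rw [if_pos hb1] at heq
              exact h.2 a s b has hsb (by omega) heq
            · rw [if_neg (show ¬ b < j by omega), if_neg (show ¬ b < j + 2 by omega)] at heq
              exact h.2 a s (b - 2) has (by omega) (by omega) heq
          · rw [if_neg (show ¬ s < j by omega), if_neg (show ¬ s < j + 2 by omega)]
            rw [if_neg (show ¬ b < j by omega), if_neg (show ¬ b < j + 2 by omega)] at heq
            exact h.2 a (s - 2) (b - 2) (by omega) (by omega) (by omega) heq
        · rw [if_neg (show ¬ a < j by omega), if_neg (show ¬ a < j + 2 by omega)] at heq ⊢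
          rw [if_neg (show ¬ b < j by omega), if_neg (show ¬ b < j + 2 by omega)] at heq
          rw [if_neg (show ¬ s < j by omega), if_neg (show ¬ s < j + 2 by omega)]
          exact h.2 (a - 2) (s - 2) (b - 2) (by omega) (by omega) (by omega) heq

lemma asc_ins {n : ℕ} {σ : List ℕ} {j : ℕ} (h : IsStirling n σ) (hj : j ≤ σ.length) :
    ascQ (ins σ (n + 1) j) + (if ent σ j < ent σ (j + 1) then 1 else 0) = ascQ σ + 1 := by
  have key := card_gap_ins (fun a b => a < b) (m := n + 1) hj
  have h1 : ent σ j ≤ n := ent_le h j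
  have h2 : ent σ (j + 1) ≤ n := ent_le h (j + 1)
  rw [if_pos (show ent σ j < n + 1 by omega), if_neg (show ¬ (n+1:ℕ) < n + 1 by omega),
    if_neg (show ¬ n + 1 < ent σ (j + 1) by omega)] at key
  beta_reduce at key
  rw [ascQ_eq_gapA, ascQ_eq_gapA]
  unfold gapA
  omega

lemma des_ins {n : ℕ} {σ : List ℕ} {j : ℕ} (h : IsStirling n σ) (hj : j ≤ σ.length) :
    desQ (ins σ (n + 1) j) + (if ent σ (j + 1) < ent σ j then 1 else 0) = desQ σ + 1 := by
  have key := card_gap_ins (fun a b => b < a) (m := n + 1) hj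
  have h1 : ent σ j ≤ n := ent_le h j
  have h2 : ent σ (j + 1) ≤ n := ent_le h (j + 1)
  rw [if_neg (show ¬ (n+1:ℕ) < ent σ j by omega), if_neg (show ¬ (n+1:ℕ) < n + 1 by omega),
    if_pos (show ent σ (j + 1) < n + 1 by omega)] at key
  beta_reduce at key
  rw [desQ_eq_gapD, desQ_eq_gapD]
  unfold gapD
  omega

lemma plat_ins {n : ℕ} {σ : List ℕ} {j : ℕ} (h : IsStirling n σ) (hn : 1 ≤ n)
    (hj : j ≤ σ.length) :
    platQ (ins σ (n + 1) j) + (if ent σ j = ent σ (j + 1) then 1 else 0) = platQ σ + 1 := by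
  have key := card_gap_ins (fun a b => a = b) (m := n + 1) hj
  have h1 : ent σ j ≤ n := ent_le h j
  have h2 : ent σ (j + 1) ≤ n := ent_le h (j + 1)
  rw [if_neg (show ¬ ent σ j = n + 1 by omega), if_pos (show (n+1:ℕ) = n + 1 by rfl),
    if_neg (show ¬ (n+1:ℕ) = ent σ (j + 1) by omega)] at key
  beta_reduce at key
  rw [platQ_eq_gapP h hn, platQ_eq_gapP (ins_stirling h hj) (by omega)]
  unfold gapP
  omega

lemma two_count_split {l : List ℕ} {a : ℕ} (h : 2 ≤ l.count a) :
    ∃ α β γ : List ℕ, l = α ++ a :: β ++ a :: γ := by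
  induction l with
  | nil => simp at h
  | cons x l ih =>
    by_cases hx : x = a
    · subst hx
      have h1 : 0 < l.count x := by
        rw [List.count_cons_self] at h; omega
      have h2 : x ∈ l := List.count_pos_iff.mp h1
      obtain ⟨s, t, rfl⟩ := List.append_of_mem h2
      exact ⟨[], s, t, by simp⟩
    · rw [List.count_cons_of_ne hx] at h
      obtain ⟨α, β, γ, rfl⟩ := ih h
      exact ⟨x :: α, β, γ, by simp⟩

lemma stirling_succ_decomp {n : ℕ} {τ : List ℕ} (h : IsStirling (n + 1) τ) :
    ∃ σ j, IsStirling n σ ∧ j ≤ σ.length ∧ τ = ins σ (n + 1) j := by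
  set m := n + 1 with hm
  have hc : 2 ≤ τ.count m := by rw [h.1]; rw [if_pos (by omega)]
  obtain ⟨α, β, γ, rfl⟩ := two_count_split hc
  have hflat : (α ++ m :: β) ++ m :: γ = α ++ m :: (β ++ m :: γ) := by simp
  rw [hflat] at h ⊢
  have hub : ∀ k, (α ++ m :: (β ++ m :: γ)).getD k 0 ≤ n + 1 := by
    intro k
    rcases getD_mem_or (α ++ m :: (β ++ m :: γ)) k with h' | h'
    · omega
    · exact (stirling_mem h h').2
  have hβ : β = [] := by
    by_contra hne
    have hβl : 1 ≤ β.length := by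
      cases β with
      | nil => simp at hne
      | cons _ _ => simp
    have e1 : (α ++ m :: (β ++ m :: γ)).getD α.length 0 = m := by
      rw [List.getD_append_right α _ 0 α.length le_rfl]
      simp
    have e2 : (α ++ m :: (β ++ m :: γ)).getD (α.length + 1 + β.length) 0 = m := by
      rw [List.getD_append_right α _ 0 _ (by omega)]
      have h5 : α.length + 1 + β.length - α.length = β.length + 1 := by omega
      rw [h5, List.getD_cons_succ]
      rw [List.getD_append_right β _ 0 _ le_rfl]
      simp
    have hlen : α.length + 1 + β.length < (α ++ m :: (β ++ m :: γ)).length := by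
      simp; omega
    have h6 := h.2 α.length (α.length + 1) (α.length + 1 + β.length) (by omega) (by omega)
      hlen (e1.trans e2.symm)
    rw [e1] at h6
    have := hub (α.length + 1)
    omega
  subst hβ
  simp only [List.nil_append] at h ⊢
  set σ := α ++ γ with hσ
  set j := α.length with hj
  have hjσ : j ≤ σ.length := by simp [hσ, hj]
  have hins : α ++ m :: m :: γ = ins σ m j := by
    unfold ins
    rw [hσ, hj]
    rw [List.take_left, List.drop_left]
  refine ⟨σ, j, ⟨?_, ?_⟩, hjσ, hins⟩
  · intro k
    have hck := h.1 k
    simp only [List.count_append, List.count_cons, List.count_nil, hσ] at hck ⊢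
    split_ifs at hck ⊢ <;> simp_all <;> omega
  · have hlift : ∀ k, σ.getD k 0 = (α ++ m :: m :: γ).getD (if k < j then k else k + 2) 0 := by
      intro k
      rw [hins, getD_ins hjσ]
      split_ifs with h1 h2 h3
      · rfl
      · omega
      · omega
      · simp
    intro a s b h1 h2 h3 heq
    rw [hlift a, hlift b] at heq
    rw [hlift a, hlift s]
    have hmono : ∀ x y, x < y → (if x < j then x else x + 2) < (if y < j then y else y + 2) := by
      intro x y hxy
      split_ifs <;> omega
    have hbound : (if b < j then b else b + 2) < (α ++ m :: m :: γ).length := by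
      have hh : (α ++ m :: m :: γ).length = σ.length + 2 := by simp [hσ]; omega
      rw [hh]
      split_ifs <;> omega
    exact h.2 _ _ _ (hmono a s h1) (hmono s b h2) hbound heq

lemma not_mem_stirling_succ {n : ℕ} {σ : List ℕ} (h : IsStirling n σ) : (n + 1) ∉ σ := by
  intro hmem
  have := stirling_mem h hmem
  omega

lemma indexOf_ins {σ : List ℕ} {m j : ℕ} (hm : m ∉ σ) (hj : j ≤ σ.length) :
    List.idxOf m (ins σ m j) = j := by
  unfold ins
  rw [List.idxOf_append_of_notMem (fun hc => hm (List.take_subset _ _ hc)),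
    List.idxOf_cons_self, List.length_take]
  omega

lemma rem_ins {σ : List ℕ} {m j : ℕ} (hj : j ≤ σ.length) :
    (ins σ m j).take j ++ (ins σ m j).drop (j + 2) = σ := by
  have h1 : (ins σ m j).take j = σ.take j := by
    unfold ins
    exact List.take_left' (by rw [List.length_take]; omega)
  have h2 : (ins σ m j).drop (j + 2) = σ.drop j := by
    have hr : ins σ m j = (σ.take j ++ [m, m]) ++ σ.drop j := by simp [ins]
    rw [hr]
    exact List.drop_left' (by simp [List.length_take]; omega)
  rw [h1, h2, List.take_append_drop]

lemma stirling_finite (n : ℕ) : {σ : List ℕ | IsStirling n σ}.Finite := by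
  apply Set.Finite.subset ((canon n).permutations.toFinset : Finset (List ℕ)).finite_toSet
  intro σ hσ
  simp only [Finset.coe_sort_coe, List.toFinset_coe, Finset.mem_coe, List.mem_toFinset,
    List.mem_permutations]
  exact stirling_perm hσ

noncomputable def Fmon (σ : List ℕ) : MvPolynomial (Fin 3) ℚ :=
  (X 0 : MvPolynomial (Fin 3) ℚ) ^ ascQ σ * X 1 ^ platQ σ * X 2 ^ desQ σ

lemma Cpoly_eq_sum (n : ℕ) :
    Cpoly n = ∑ σ ∈ (stirling_finite n).toFinset, Fmon σ := by
  unfold Cpoly Fmon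
  exact finsum_mem_eq_finite_toFinset_sum _ (stirling_finite n)

lemma deriv_key (a p d : ℕ) :
    (X 0 : MvPolynomial (Fin 3) ℚ) * X 1 * X 2 *
      (pderiv 0 (X 0 ^ a * X 1 ^ p * X 2 ^ d) + pderiv 1 (X 0 ^ a * X 1 ^ p * X 2 ^ d)
        + pderiv 2 (X 0 ^ a * X 1 ^ p * X 2 ^ d)) =
    a • (X 0 ^ a * X 1 ^ (p+1) * X 2 ^ (d+1)) + p • (X 0 ^ (a+1) * X 1 ^ p * X 2 ^ (d+1))
      + d • (X 0 ^ (a+1) * X 1 ^ (p+1) * X 2 ^ d) := by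
  have e01 : (pderiv 0) (X 1 : MvPolynomial (Fin 3) ℚ) = 0 := pderiv_X_of_ne (by decide)
  have e02 : (pderiv 0) (X 2 : MvPolynomial (Fin 3) ℚ) = 0 := pderiv_X_of_ne (by decide)
  have e10 : (pderiv 1) (X 0 : MvPolynomial (Fin 3) ℚ) = 0 := pderiv_X_of_ne (by decide)
  have e12 : (pderiv 1) (X 2 : MvPolynomial (Fin 3) ℚ) = 0 := pderiv_X_of_ne (by decide)
  have e20 : (pderiv 2) (X 0 : MvPolynomial (Fin 3) ℚ) = 0 := pderiv_X_of_ne (by decide)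
  have e21 : (pderiv 2) (X 1 : MvPolynomial (Fin 3) ℚ) = 0 := pderiv_X_of_ne (by decide)
  rcases a with _|a <;> rcases p with _|p <;> rcases d with _|d <;>
    simp only [pderiv_mul, Derivation.leibniz_pow, pderiv_X_self, e01, e02, e10, e12, e20, e21,
      Derivation.map_one_eq_zero, nsmul_eq_mul, smul_eq_mul, Nat.add_sub_cancel, pow_zero,
      Nat.cast_zero, zero_mul, mul_zero, zero_add, add_zero, mul_one, one_mul,
      Nat.cast_add, Nat.cast_one] <;>
    push_cast <;> ring

lemma ins_gap_sum {n : ℕ} {σ : List ℕ} (h : IsStirling n σ) (hn : 1 ≤ n) :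
    ∑ j ∈ Finset.range (σ.length + 1), Fmon (ins σ (n + 1) j) =
      X 0 * X 1 * X 2 * (pderiv 0 (Fmon σ) + pderiv 1 (Fmon σ) + pderiv 2 (Fmon σ)) := by
  rw [gap_split σ (fun j => Fmon (ins σ (n + 1) j))]
  have hA : ∀ j ∈ gapA σ, Fmon (ins σ (n + 1) j)
      = X 0 ^ ascQ σ * X 1 ^ (platQ σ + 1) * X 2 ^ (desQ σ + 1) := by
    intro j hj
    simp only [gapA, Finset.mem_filter, Finset.mem_range] at hj
    have hjl : j ≤ σ.length := by omega
    have h1 := asc_ins h hjl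
    have h2 := plat_ins h hn hjl
    have h3 := des_ins h hjl
    rw [if_pos hj.2] at h1
    rw [if_neg (by omega)] at h2
    rw [if_neg (by omega)] at h3
    unfold Fmon
    rw [show ascQ (ins σ (n+1) j) = ascQ σ by omega,
      show platQ (ins σ (n+1) j) = platQ σ + 1 by omega,
      show desQ (ins σ (n+1) j) = desQ σ + 1 by omega]
  have hP : ∀ j ∈ gapP σ, Fmon (ins σ (n + 1) j)
      = X 0 ^ (ascQ σ + 1) * X 1 ^ platQ σ * X 2 ^ (desQ σ + 1) := by
    intro j hj
    simp only [gapP, Finset.mem_filter, Finset.mem_range] at hj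
    have hjl : j ≤ σ.length := by omega
    have h1 := asc_ins h hjl
    have h2 := plat_ins h hn hjl
    have h3 := des_ins h hjl
    rw [if_neg (by omega)] at h1
    rw [if_pos hj.2] at h2
    rw [if_neg (by omega)] at h3
    unfold Fmon
    rw [show ascQ (ins σ (n+1) j) = ascQ σ + 1 by omega,
      show platQ (ins σ (n+1) j) = platQ σ by omega,
      show desQ (ins σ (n+1) j) = desQ σ + 1 by omega]
  have hD : ∀ j ∈ gapD σ, Fmon (ins σ (n + 1) j)
      = X 0 ^ (ascQ σ + 1) * X 1 ^ (platQ σ + 1) * X 2 ^ desQ σ := by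
    intro j hj
    simp only [gapD, Finset.mem_filter, Finset.mem_range] at hj
    have hjl : j ≤ σ.length := by omega
    have h1 := asc_ins h hjl
    have h2 := plat_ins h hn hjl
    have h3 := des_ins h hjl
    rw [if_neg (by omega)] at h1
    rw [if_neg (by omega)] at h2
    rw [if_pos hj.2] at h3
    unfold Fmon
    rw [show ascQ (ins σ (n+1) j) = ascQ σ + 1 by omega,
      show platQ (ins σ (n+1) j) = platQ σ + 1 by omega,
      show desQ (ins σ (n+1) j) = desQ σ by omega]
  rw [Finset.sum_congr rfl hA, Finset.sum_congr rfl hP, Finset.sum_congr rfl hD,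
    Finset.sum_const, Finset.sum_const, Finset.sum_const,
    ← ascQ_eq_gapA, ← desQ_eq_gapD, ← platQ_eq_gapP h hn]
  unfold Fmon
  exact (deriv_key (ascQ σ) (platQ σ) (desQ σ)).symm

theorem Cpoly_recurrence :
    Cpoly 1 = X 0 * X 1 * X 2 ∧
    ∀ n : ℕ, 1 ≤ n →
      Cpoly (n + 1) =
        X 0 * X 1 * X 2 *
          (pderiv 0 (Cpoly n) + pderiv 1 (Cpoly n) + pderiv 2 (Cpoly n)) := by
  constructor
  · have hset : {σ : List ℕ | IsStirling 1 σ} = {[1, 1]} := by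
      ext σ
      simp only [Set.mem_setOf_eq, Set.mem_singleton_iff]
      constructor
      · intro h
        have hp := stirling_perm h
        have hc : canon 1 = List.replicate 2 1 := rfl
        rw [hc] at hp
        rw [List.perm_replicate.mp hp]
        rfl
      · rintro rfl
        constructor
        · intro k
          simp only [List.count_cons, List.count_nil]
          split_ifs <;> simp_all <;> omega
        · intro i s j h1 h2 h3 _
          simp only [List.length_cons, List.length_nil] at h3
          omega
    unfold Cpoly
    rw [hset, finsum_mem_singleton]
    have ha : ascQ [1, 1] = 1 := by decide
    have hp : platQ [1, 1] = 1 := by decide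
    have hd : desQ [1, 1] = 1 := by decide
    rw [ha, hp, hd, pow_one, pow_one, pow_one]
  · intro n hn
    have hbij : ∑ τ ∈ (stirling_finite (n+1)).toFinset, Fmon τ
        = ∑ p ∈ (stirling_finite n).toFinset ×ˢ Finset.range (2*n+1),
            Fmon (ins p.1 (n+1) p.2) := by
      apply Finset.sum_nbij'
        (i := fun τ => (τ.take (List.idxOf (n+1) τ) ++ τ.drop (List.idxOf (n+1) τ + 2),
          List.idxOf (n+1) τ))
        (j := fun p => ins p.1 (n+1) p.2)
      · intro τ hτ
        rw [Set.Finite.mem_toFinset] at hτ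
        obtain ⟨σ, j, hσ, hj, rfl⟩ := stirling_succ_decomp hτ
        have hidx := indexOf_ins (not_mem_stirling_succ hσ) hj
        rw [Finset.mem_product]
        constructor
        · simp only [hidx, rem_ins hj, Set.Finite.mem_toFinset]
          exact hσ
        · simp only [hidx, Finset.mem_range]
          have := stirling_length hσ
          omega
      · intro p hp
        rw [Finset.mem_product, Set.Finite.mem_toFinset, Finset.mem_range] at hp
        rw [Set.Finite.mem_toFinset]
        have hL := stirling_length hp.1
        exact ins_stirling hp.1 (by omega)
      · intro τ hτ
        rw [Set.Finite.mem_toFinset] at hτ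
        obtain ⟨σ, j, hσ, hj, rfl⟩ := stirling_succ_decomp hτ
        have hidx := indexOf_ins (not_mem_stirling_succ hσ) hj
        simp only [hidx, rem_ins hj]
      · intro p hp
        rw [Finset.mem_product, Set.Finite.mem_toFinset, Finset.mem_range] at hp
        have hL := stirling_length hp.1
        have hj : p.2 ≤ p.1.length := by omega
        have hidx := indexOf_ins (not_mem_stirling_succ hp.1) hj
        simp only [hidx, rem_ins hj]
      · intro τ hτ
        rw [Set.Finite.mem_toFinset] at hτ
        obtain ⟨σ, j, hσ, hj, rfl⟩ := stirling_succ_decomp hτ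
        have hidx := indexOf_ins (not_mem_stirling_succ hσ) hj
        simp only [hidx, rem_ins hj]
    rw [Cpoly_eq_sum, hbij, Finset.sum_product]
    have hinner : ∀ σ ∈ (stirling_finite n).toFinset,
        ∑ j ∈ Finset.range (2*n+1), Fmon (ins σ (n+1) j)
          = X 0 * X 1 * X 2 * (pderiv 0 (Fmon σ) + pderiv 1 (Fmon σ) + pderiv 2 (Fmon σ)) := by
      intro σ hσ
      rw [Set.Finite.mem_toFinset] at hσ
      have hL := stirling_length hσ
      rw [show 2*n+1 = σ.length + 1 by omega]
      exact ins_gap_sum hσ hn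
    rw [Finset.sum_congr rfl hinner]
    rw [Cpoly_eq_sum n, map_sum, map_sum, map_sum, ← Finset.sum_add_distrib,
      ← Finset.sum_add_distrib, Finset.mul_sum]
end

section
/- Define the grammar-derivation operator D on ℚ[u,v,w] by D(u) = 3w, D(v) = 2uw, D(w) = vw, extended as a derivation. Then for all n ≥ 1, D^{n-1}(w) = Σ_{i+2j+3k = 2n+1} γ_{n,i,j,k} u^i v^j w^k for nonnegative integers γ_{n,i,j,k} satisfying γ_{1,0,0,1} = 1 and γ_{n,i,j,k} = 3(i+1)γ_{n-1,i+1,j,k-1} + 2(j+1)γ_{n-1,i-1,j+1,k-1} + k·γ_{n-1,i,j-1,k}. -/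
open MvPolynomial Finsupp

private def g : ℕ → ℤ → ℤ → ℤ → ℕ
  | 0, _, _, _ => 0
  | 1, i, j, k => if i = 0 ∧ j = 0 ∧ k = 1 then 1 else 0
  | (n+2), i, j, k =>
    if 0 ≤ i ∧ 0 ≤ j ∧ 0 ≤ k then
      (3*(i+1)).toNat * g (n+1) (i+1) j (k-1)
        + (2*(j+1)).toNat * g (n+1) (i-1) (j+1) (k-1)
        + k.toNat * g (n+1) i (j-1) k
    else 0

private lemma g_one (i j k : ℤ) : g 1 i j k = if i = 0 ∧ j = 0 ∧ k = 1 then 1 else 0 := rfl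

private lemma g_neg : ∀ (n : ℕ) (i j k : ℤ), (i < 0 ∨ j < 0 ∨ k < 0) → g n i j k = 0
  | 0, i, j, k, _ => rfl
  | 1, i, j, k, h => by
      rw [g_one, if_neg]; rintro ⟨rfl, rfl, rfl⟩; omega
  | (n+2), i, j, k, h => by
      show (if 0 ≤ i ∧ 0 ≤ j ∧ 0 ≤ k then _ else 0) = 0
      rw [if_neg]; omega

private lemma g_rec (n : ℕ) (i j k : ℤ) (hi : 0 ≤ i) (hj : 0 ≤ j) (hk : 0 ≤ k) :
    (g (n+2) i j k : ℤ) = 3*(i+1) * g (n+1) (i+1) j (k-1)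
      + 2*(j+1) * g (n+1) (i-1) (j+1) (k-1) + k * g (n+1) i (j-1) k := by
  show ((if 0 ≤ i ∧ 0 ≤ j ∧ 0 ≤ k then _ else 0 : ℕ) : ℤ) = _
  rw [if_pos ⟨hi, hj, hk⟩]
  push_cast [Int.toNat_of_nonneg (by omega : (0:ℤ) ≤ 3*(i+1)),
    Int.toNat_of_nonneg (by omega : (0:ℤ) ≤ 2*(j+1)), Int.toNat_of_nonneg hk]
  ring

private lemma g_supp : ∀ (n : ℕ), 1 ≤ n → ∀ (i j k : ℤ), g n i j k ≠ 0 →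
    i + 2*j + 3*k = 2*n + 1
  | 1, _, i, j, k, h => by
      rw [g_one] at h
      by_cases hc : i = 0 ∧ j = 0 ∧ k = 1
      · obtain ⟨rfl, rfl, rfl⟩ := hc; norm_num
      · rw [if_neg hc] at h; exact absurd rfl h
  | (n+2), _, i, j, k, h => by
      rw [show g (n+2) i j k = if 0 ≤ i ∧ 0 ≤ j ∧ 0 ≤ k then
          (3*(i+1)).toNat * g (n+1) (i+1) j (k-1)
            + (2*(j+1)).toNat * g (n+1) (i-1) (j+1) (k-1)
            + k.toNat * g (n+1) i (j-1) k else 0 from rfl] at h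
      by_cases hc : 0 ≤ i ∧ 0 ≤ j ∧ 0 ≤ k
      · rw [if_pos hc] at h
        have h3 : (3*(i+1)).toNat * g (n+1) (i+1) j (k-1) ≠ 0 ∨
            (2*(j+1)).toNat * g (n+1) (i-1) (j+1) (k-1) ≠ 0 ∨
            k.toNat * g (n+1) i (j-1) k ≠ 0 := by omega
        rcases h3 with h3 | h3 | h3
        · have := g_supp (n+1) (by omega) (i+1) j (k-1) (by
            intro h0; rw [h0, Nat.mul_zero] at h3; exact h3 rfl)
          push_cast at this ⊢; omega
        · have := g_supp (n+1) (by omega) (i-1) (j+1) (k-1) (by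
            intro h0; rw [h0, Nat.mul_zero] at h3; exact h3 rfl)
          push_cast at this ⊢; omega
        · have := g_supp (n+1) (by omega) i (j-1) k (by
            intro h0; rw [h0, Nat.mul_zero] at h3; exact h3 rfl)
          push_cast at this ⊢; omega
      · rw [if_neg hc] at h; exact absurd rfl h

private noncomputable def sv (i j k : ℕ) : Fin 3 →₀ ℕ :=
  Finsupp.single 0 i + Finsupp.single 1 j + Finsupp.single 2 k

private lemma sv_apply (i j k : ℕ) : sv i j k 0 = i ∧ sv i j k 1 = j ∧ sv i j k 2 = k := by
  refine ⟨?_, ?_, ?_⟩ <;> simp [sv, Finsupp.single_apply]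

private lemma eq_sv_iff (m : Fin 3 →₀ ℕ) (i j k : ℕ) :
    sv i j k = m ↔ m 0 = i ∧ m 1 = j ∧ m 2 = k := by
  constructor
  · rintro rfl; exact ⟨(sv_apply i j k).1, (sv_apply i j k).2.1, (sv_apply i j k).2.2⟩
  · rintro ⟨h0, h1, h2⟩
    ext x
    fin_cases x
    · show sv i j k 0 = m 0; rw [(sv_apply i j k).1, h0]
    · show sv i j k 1 = m 1; rw [(sv_apply i j k).2.1, h1]
    · show sv i j k 2 = m 2; rw [(sv_apply i j k).2.2, h2]

private lemma mono_eq (i j k : ℕ) :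
    (X 0 : MvPolynomial (Fin 3) ℚ) ^ i * X 1 ^ j * X 2 ^ k = monomial (sv i j k) 1 := by
  rw [X_pow_eq_monomial, X_pow_eq_monomial, X_pow_eq_monomial, monomial_mul, monomial_mul, sv]
  norm_num

private noncomputable def Q (n : ℕ) : MvPolynomial (Fin 3) ℚ :=
  ∑ p ∈ (Finset.range (2*n+2) ×ˢ Finset.range (2*n+2) ×ˢ Finset.range (2*n+2)).filter
      (fun p => p.1 + 2*p.2.1 + 3*p.2.2 = 2*n+1),
    ((g n p.1 p.2.1 p.2.2 : ℕ) : MvPolynomial (Fin 3) ℚ) * X 0 ^ p.1 * X 1 ^ p.2.1 * X 2 ^ p.2.2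

private lemma term_eq (n : ℕ) (p : ℕ × ℕ × ℕ) :
    ((g n p.1 p.2.1 p.2.2 : ℕ) : MvPolynomial (Fin 3) ℚ) * X 0 ^ p.1 * X 1 ^ p.2.1 * X 2 ^ p.2.2
      = monomial (sv p.1 p.2.1 p.2.2) ((g n p.1 p.2.1 p.2.2 : ℚ)) := by
  rw [mul_assoc, mul_assoc, ← mul_assoc (X 0 ^ p.1), mono_eq, ← map_natCast (C : ℚ →+* MvPolynomial (Fin 3) ℚ),
    C_mul_monomial, mul_one]

private lemma coeffQ (n : ℕ) (hn : 1 ≤ n) (m : Fin 3 →₀ ℕ) :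
    coeff m (Q n) = (g n (m 0) (m 1) (m 2) : ℚ) := by
  rw [Q, coeff_sum]
  have : ∀ p ∈ (Finset.range (2*n+2) ×ˢ Finset.range (2*n+2) ×ˢ Finset.range (2*n+2)).filter
      (fun p => p.1 + 2*p.2.1 + 3*p.2.2 = 2*n+1),
      coeff m (((g n p.1 p.2.1 p.2.2 : ℕ) : MvPolynomial (Fin 3) ℚ) * X 0 ^ p.1 * X 1 ^ p.2.1 * X 2 ^ p.2.2)
        = if p = (m 0, m 1, m 2) then (g n (p.1:ℤ) (p.2.1:ℤ) (p.2.2:ℤ) : ℚ) else 0 := by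
    intro p _
    rw [term_eq, coeff_monomial]
    by_cases hp : p = ((m 0 : ℕ), (m 1 : ℕ), (m 2 : ℕ))
    · subst hp
      rw [if_pos ((eq_sv_iff m _ _ _).2 ⟨rfl, rfl, rfl⟩), if_pos rfl]
    · rw [if_neg, if_neg hp]
      rw [eq_sv_iff]
      rintro ⟨h0, h1, h2⟩
      apply hp
      rw [Prod.ext_iff, Prod.ext_iff]
      exact ⟨h0.symm, h1.symm, h2.symm⟩
  rw [Finset.sum_congr rfl this, Finset.sum_ite_eq']
  by_cases hmem : ((m 0 : ℕ), (m 1 : ℕ), (m 2 : ℕ)) ∈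
      (Finset.range (2*n+2) ×ˢ Finset.range (2*n+2) ×ˢ Finset.range (2*n+2)).filter
      (fun p => p.1 + 2*p.2.1 + 3*p.2.2 = 2*n+1)
  · rw [if_pos hmem]
  · rw [if_neg hmem]
    simp only [Finset.mem_filter, Finset.mem_product, Finset.mem_range] at hmem
    by_cases hz : g n (m 0) (m 1) (m 2) = 0
    · rw [hz]; norm_num
    · exfalso
      have := g_supp n hn _ _ _ hz
      apply hmem
      constructor
      · refine ⟨?_, ?_, ?_⟩ <;> omega
      · omega

private def S (n : ℕ) : Finset (ℕ × ℕ × ℕ) :=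
  (Finset.range (2*n+2) ×ˢ Finset.range (2*n+2) ×ˢ Finset.range (2*n+2)).filter
    (fun p => p.1 + 2*p.2.1 + 3*p.2.2 = 2*n+1)

private lemma mem_S (n : ℕ) (p : ℕ × ℕ × ℕ) (h : p.1 + 2*p.2.1 + 3*p.2.2 = 2*n+1) :
    p ∈ S n := by
  simp only [S, Finset.mem_filter, Finset.mem_product, Finset.mem_range]
  omega

private lemma g_supp' (n : ℕ) (hn : 1 ≤ n) (a b c : ℕ) (h : g n a b c ≠ 0) :
    (a, b, c) ∈ S n := by
  have := g_supp n hn a b c h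
  apply mem_S
  show a + 2*b + 3*c = 2*n+1
  omega

private lemma Dmono (D : Derivation ℚ (MvPolynomial (Fin 3) ℚ) (MvPolynomial (Fin 3) ℚ))
    (hu : D (X 0) = 3 * X 2) (hv : D (X 1) = 2 * X 0 * X 2) (hw : D (X 2) = X 1 * X 2)
    (i j k : ℕ) :
    D ((X 0 : MvPolynomial (Fin 3) ℚ) ^ i * X 1 ^ j * X 2 ^ k)
      = ((3*i : ℚ)) • (X 0 ^ (i-1) * X 1 ^ j * X 2 ^ (k+1))
        + ((2*j : ℚ)) • (X 0 ^ (i+1) * X 1 ^ (j-1) * X 2 ^ (k+1))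
        + ((k : ℚ)) • (X 0 ^ i * X 1 ^ (j+1) * X 2 ^ k) := by
  rw [Derivation.leibniz, Derivation.leibniz, Derivation.leibniz_pow, Derivation.leibniz_pow,
    Derivation.leibniz_pow, hu, hv, hw]
  rcases i with _ | i <;> rcases j with _ | j <;> rcases k with _ | k <;>
    · simp only [smul_eq_mul, nsmul_eq_mul, MvPolynomial.smul_eq_C_mul, map_mul, map_natCast,
        map_ofNat, map_zero, MvPolynomial.C_0, Nat.cast_zero, Nat.succ_sub_one, Nat.zero_sub, pow_zero, Nat.cast_zero, Nat.cast_succ,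
        Nat.cast_ofNat, map_add, map_one, Nat.cast_mul]
      push_cast
      ring

private lemma sum1 (n : ℕ) (hn : 1 ≤ n) (m : Fin 3 →₀ ℕ) :
    ∑ p ∈ S n, (g n (p.1:ℤ) (p.2.1:ℤ) (p.2.2:ℤ) : ℚ) *
        ((3 * p.1 : ℚ) * (if sv (p.1-1) p.2.1 (p.2.2+1) = m then 1 else 0))
      = 3 * ((m 0 : ℚ) + 1) * (g n ((m 0 : ℤ)+1) (m 1) ((m 2 : ℤ)-1) : ℚ) := by
  rcases hm2 : m 2 with _ | m2
  · rw [g_neg n _ _ _ (by right; right; omega), Finset.sum_eq_zero]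
    · norm_num
    · rintro ⟨p1, p2, p3⟩ _
      dsimp only
      rw [if_neg, mul_zero, mul_zero]
      intro hc
      obtain ⟨-, -, h2⟩ := (eq_sv_iff m _ _ _).1 hc
      omega
  · have key : ∀ p ∈ S n, (g n (p.1:ℤ) (p.2.1:ℤ) (p.2.2:ℤ) : ℚ) *
        ((3 * p.1 : ℚ) * (if sv (p.1-1) p.2.1 (p.2.2+1) = m then 1 else 0))
        = if p = (m 0 + 1, m 1, m2) then
            (g n (p.1:ℤ) (p.2.1:ℤ) (p.2.2:ℤ) : ℚ) * (3 * p.1 : ℚ) else 0 := by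
      rintro ⟨p1, p2, p3⟩ -
      dsimp only
      by_cases hp : (p1, p2, p3) = (m 0 + 1, m 1, m2)
      · rw [if_pos hp, if_pos ((eq_sv_iff m _ _ _).2 ⟨by
          simp only [Prod.mk.injEq] at hp; omega, by
          simp only [Prod.mk.injEq] at hp; omega, by
          simp only [Prod.mk.injEq] at hp; omega⟩)]
        ring
      · rw [if_neg hp]
        by_cases hc : sv (p1-1) p2 (p3+1) = m
        · obtain ⟨h0, h1, h2⟩ := (eq_sv_iff m _ _ _).1 hc
          simp only [Prod.mk.injEq] at hp
          have hp1 : p1 = 0 := by omega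
          rw [hp1]
          norm_num
        · rw [if_neg hc, mul_zero, mul_zero]
    rw [Finset.sum_congr rfl key, Finset.sum_ite_eq']
    rw [show (((m2+1:ℕ):ℤ) - 1) = ((m2:ℕ):ℤ) by push_cast; ring,
      show ((m 0:ℤ) + 1) = ((m 0 + 1 : ℕ):ℤ) by push_cast; ring]
    by_cases hmem : ((m 0 + 1 : ℕ), (m 1 : ℕ), m2) ∈ S n
    · rw [if_pos hmem]
      dsimp only
      push_cast
      ring
    · rw [if_neg hmem]
      have hg : g n ((m 0 + 1 : ℕ):ℤ) ((m 1:ℕ):ℤ) ((m2:ℕ):ℤ) = 0 := by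
        by_contra h
        exact hmem (g_supp' n hn _ _ _ h)
      rw [hg]
      norm_num

private lemma sum2 (n : ℕ) (hn : 1 ≤ n) (m : Fin 3 →₀ ℕ) :
    ∑ p ∈ S n, (g n (p.1:ℤ) (p.2.1:ℤ) (p.2.2:ℤ) : ℚ) *
        ((2 * p.2.1 : ℚ) * (if sv (p.1+1) (p.2.1-1) (p.2.2+1) = m then 1 else 0))
      = 2 * ((m 1 : ℚ) + 1) * (g n ((m 0 : ℤ)-1) ((m 1 : ℤ)+1) ((m 2 : ℤ)-1) : ℚ) := by
  rcases hm0 : m 0 with _ | m0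
  · rw [g_neg n _ _ _ (by left; omega), Finset.sum_eq_zero]
    · norm_num
    · rintro ⟨p1, p2, p3⟩ _
      dsimp only
      rw [if_neg, mul_zero, mul_zero]
      intro hc
      obtain ⟨h0, -, -⟩ := (eq_sv_iff m _ _ _).1 hc
      omega
  · rcases hm2 : m 2 with _ | m2
    · rw [g_neg n _ _ _ (by right; right; omega), Finset.sum_eq_zero]
      · norm_num
      · rintro ⟨p1, p2, p3⟩ _
        dsimp only
        rw [if_neg, mul_zero, mul_zero]
        intro hc
        obtain ⟨-, -, h2⟩ := (eq_sv_iff m _ _ _).1 hc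
        omega
    · have key : ∀ p ∈ S n, (g n (p.1:ℤ) (p.2.1:ℤ) (p.2.2:ℤ) : ℚ) *
          ((2 * p.2.1 : ℚ) * (if sv (p.1+1) (p.2.1-1) (p.2.2+1) = m then 1 else 0))
          = if p = (m0, m 1 + 1, m2) then
              (g n (p.1:ℤ) (p.2.1:ℤ) (p.2.2:ℤ) : ℚ) * (2 * p.2.1 : ℚ) else 0 := by
        rintro ⟨p1, p2, p3⟩ -
        dsimp only
        by_cases hp : (p1, p2, p3) = (m0, m 1 + 1, m2)
        · rw [if_pos hp, if_pos ((eq_sv_iff m _ _ _).2 ⟨by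
            simp only [Prod.mk.injEq] at hp; omega, by
            simp only [Prod.mk.injEq] at hp; omega, by
            simp only [Prod.mk.injEq] at hp; omega⟩)]
          ring
        · rw [if_neg hp]
          by_cases hc : sv (p1+1) (p2-1) (p3+1) = m
          · obtain ⟨h0, h1, h2⟩ := (eq_sv_iff m _ _ _).1 hc
            simp only [Prod.mk.injEq] at hp
            have hp2 : p2 = 0 := by omega
            rw [hp2]
            norm_num
          · rw [if_neg hc, mul_zero, mul_zero]
      rw [Finset.sum_congr rfl key, Finset.sum_ite_eq']
      rw [show (((m0+1:ℕ):ℤ) - 1) = ((m0:ℕ):ℤ) by push_cast; ring,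
        show (((m2+1:ℕ):ℤ) - 1) = ((m2:ℕ):ℤ) by push_cast; ring,
        show ((m 1:ℤ) + 1) = ((m 1 + 1 : ℕ):ℤ) by push_cast; ring]
      by_cases hmem : ((m0:ℕ), (m 1 + 1 : ℕ), m2) ∈ S n
      · rw [if_pos hmem]
        dsimp only
        push_cast
        ring
      · rw [if_neg hmem]
        have hg : g n ((m0:ℕ):ℤ) ((m 1 + 1:ℕ):ℤ) ((m2:ℕ):ℤ) = 0 := by
          by_contra h
          exact hmem (g_supp' n hn _ _ _ h)
        rw [hg]
        norm_num

private lemma sum3 (n : ℕ) (hn : 1 ≤ n) (m : Fin 3 →₀ ℕ) :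
    ∑ p ∈ S n, (g n (p.1:ℤ) (p.2.1:ℤ) (p.2.2:ℤ) : ℚ) *
        ((p.2.2 : ℚ) * (if sv p.1 (p.2.1+1) p.2.2 = m then 1 else 0))
      = (m 2 : ℚ) * (g n (m 0 : ℤ) ((m 1 : ℤ)-1) (m 2 : ℤ) : ℚ) := by
  rcases hm1 : m 1 with _ | m1
  · rw [g_neg n _ _ _ (by right; left; omega), Finset.sum_eq_zero]
    · norm_num
    · rintro ⟨p1, p2, p3⟩ _
      dsimp only
      rw [if_neg, mul_zero, mul_zero]
      intro hc
      obtain ⟨-, h1, -⟩ := (eq_sv_iff m _ _ _).1 hc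
      omega
  · have key : ∀ p ∈ S n, (g n (p.1:ℤ) (p.2.1:ℤ) (p.2.2:ℤ) : ℚ) *
        ((p.2.2 : ℚ) * (if sv p.1 (p.2.1+1) p.2.2 = m then 1 else 0))
        = if p = (m 0, m1, m 2) then
            (g n (p.1:ℤ) (p.2.1:ℤ) (p.2.2:ℤ) : ℚ) * (p.2.2 : ℚ) else 0 := by
      rintro ⟨p1, p2, p3⟩ -
      dsimp only
      by_cases hp : (p1, p2, p3) = (m 0, m1, m 2)
      · rw [if_pos hp, if_pos ((eq_sv_iff m _ _ _).2 ⟨by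
          simp only [Prod.mk.injEq] at hp; omega, by
          simp only [Prod.mk.injEq] at hp; omega, by
          simp only [Prod.mk.injEq] at hp; omega⟩)]
        ring
      · rw [if_neg hp]
        rw [if_neg, mul_zero, mul_zero]
        intro hc
        obtain ⟨h0, h1, h2⟩ := (eq_sv_iff m _ _ _).1 hc
        simp only [Prod.mk.injEq] at hp
        omega
    rw [Finset.sum_congr rfl key, Finset.sum_ite_eq']
    rw [show (((m1+1:ℕ):ℤ) - 1) = ((m1:ℕ):ℤ) by push_cast; ring]
    by_cases hmem : ((m 0:ℕ), (m1:ℕ), (m 2:ℕ)) ∈ S n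
    · rw [if_pos hmem]
      dsimp only
      ring
    · rw [if_neg hmem]
      have hg : g n ((m 0:ℕ):ℤ) ((m1:ℕ):ℤ) ((m 2:ℕ):ℤ) = 0 := by
        by_contra h
        exact hmem (g_supp' n hn _ _ _ h)
      rw [hg]
      norm_num

private lemma base : (X 2 : MvPolynomial (Fin 3) ℚ) = Q 1 := by
  ext m
  rw [coeffQ 1 le_rfl m,
    show (X 2 : MvPolynomial (Fin 3) ℚ) = X 0 ^ 0 * X 1 ^ 0 * X 2 ^ 1 by ring,
    mono_eq, coeff_monomial, g_one]
  by_cases h : m 0 = 0 ∧ m 1 = 0 ∧ m 2 = 1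
  · rw [if_pos ((eq_sv_iff m 0 0 1).2 h), if_pos (by exact ⟨by omega, by omega, by omega⟩)]
    norm_num
  · rw [if_neg (fun hc => h ((eq_sv_iff m 0 0 1).1 hc)), if_neg (by omega)]
    norm_num

private lemma step (D : Derivation ℚ (MvPolynomial (Fin 3) ℚ) (MvPolynomial (Fin 3) ℚ))
    (hu : D (X 0) = 3 * X 2) (hv : D (X 1) = 2 * X 0 * X 2) (hw : D (X 2) = X 1 * X 2)
    (n : ℕ) (hn : 1 ≤ n) : D (Q n) = Q (n + 1) := by
  obtain ⟨n', rfl⟩ : ∃ n', n = n' + 1 := ⟨n - 1, by omega⟩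
  ext m
  rw [coeffQ (n' + 1 + 1) (by omega) m]
  have hQ : Q (n' + 1) = ∑ p ∈ S (n' + 1),
      ((g (n' + 1) (p.1 : ℤ) (p.2.1 : ℤ) (p.2.2 : ℤ) : ℕ) : MvPolynomial (Fin 3) ℚ) *
        X 0 ^ p.1 * X 1 ^ p.2.1 * X 2 ^ p.2.2 := rfl
  rw [hQ, map_sum, coeff_sum]
  have hterm : ∀ p ∈ S (n' + 1),
      coeff m (D (((g (n' + 1) (p.1 : ℤ) (p.2.1 : ℤ) (p.2.2 : ℤ) : ℕ) : MvPolynomial (Fin 3) ℚ) *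
          X 0 ^ p.1 * X 1 ^ p.2.1 * X 2 ^ p.2.2))
        = (g (n' + 1) (p.1:ℤ) (p.2.1:ℤ) (p.2.2:ℤ) : ℚ) *
            ((3 * p.1 : ℚ) * (if sv (p.1-1) p.2.1 (p.2.2+1) = m then 1 else 0))
          + (g (n' + 1) (p.1:ℤ) (p.2.1:ℤ) (p.2.2:ℤ) : ℚ) *
            ((2 * p.2.1 : ℚ) * (if sv (p.1+1) (p.2.1-1) (p.2.2+1) = m then 1 else 0))
          + (g (n' + 1) (p.1:ℤ) (p.2.1:ℤ) (p.2.2:ℤ) : ℚ) *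
            ((p.2.2 : ℚ) * (if sv p.1 (p.2.1+1) p.2.2 = m then 1 else 0)) := by
    rintro ⟨p1, p2, p3⟩ -
    dsimp only
    rw [show ((g (n' + 1) (p1:ℤ) (p2:ℤ) (p3:ℤ) : ℕ) : MvPolynomial (Fin 3) ℚ) *
          X 0 ^ p1 * X 1 ^ p2 * X 2 ^ p3
        = (g (n' + 1) (p1:ℤ) (p2:ℤ) (p3:ℤ) : ℚ) • ((X 0 : MvPolynomial (Fin 3) ℚ) ^ p1 * X 1 ^ p2 * X 2 ^ p3) by
      rw [MvPolynomial.smul_eq_C_mul, ← map_natCast (C : ℚ →+* MvPolynomial (Fin 3) ℚ)]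
      ring]
    rw [D.map_smul, Dmono D hu hv hw p1 p2 p3]
    simp only [MvPolynomial.coeff_smul, MvPolynomial.coeff_add, mono_eq, coeff_monomial,
      smul_eq_mul]
    ring
  rw [Finset.sum_congr rfl hterm]
  simp only [Finset.sum_add_distrib]
  rw [sum1 (n' + 1) (by omega) m, sum2 (n' + 1) (by omega) m, sum3 (n' + 1) (by omega) m]
  have hrec := g_rec n' (m 0) (m 1) (m 2) (by positivity) (by positivity) (by positivity)
  have hrecq := congrArg (fun z : ℤ => (z : ℚ)) hrec
  push_cast at hrecq
  linear_combination hrecq.symm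

/-- with `u = X 0`, `v = X 1`, `w = X 2`, and `D` the derivation on
`ℚ[u,v,w]` with `D u = 3w`, `D v = 2uw`, `D w = vw`, the iterates `D^{n-1}(w)` expand
with nonnegative integer coefficients `γ_{n,i,j,k}` supported on `i + 2j + 3k = 2n+1`
and satisfying the stated recurrence (coefficients with a negative index vanish). -/
theorem grammar_expansion
    (D : Derivation ℚ (MvPolynomial (Fin 3) ℚ) (MvPolynomial (Fin 3) ℚ))
    (hu : D (X 0) = 3 * X 2)
    (hv : D (X 1) = 2 * X 0 * X 2)
    (hw : D (X 2) = X 1 * X 2) :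
    ∃ γ : ℕ → ℤ → ℤ → ℤ → ℕ,
      γ 1 0 0 1 = 1 ∧
      (∀ (n : ℕ) (i j k : ℤ), (i < 0 ∨ j < 0 ∨ k < 0) → γ n i j k = 0) ∧
      (∀ n : ℕ, 2 ≤ n → ∀ i j k : ℤ, 0 ≤ i → 0 ≤ j → 0 ≤ k →
        (γ n i j k : ℤ) =
          3 * (i + 1) * (γ (n - 1) (i + 1) j (k - 1) : ℤ)
            + 2 * (j + 1) * (γ (n - 1) (i - 1) (j + 1) (k - 1) : ℤ)
            + k * (γ (n - 1) i (j - 1) k : ℤ)) ∧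
      (∀ n : ℕ, 1 ≤ n →
        (fun p => D p)^[n - 1] (X 2) =
          ∑ p ∈ (Finset.range (2 * n + 2) ×ˢ Finset.range (2 * n + 2) ×ˢ
                Finset.range (2 * n + 2)).filter
              (fun p => p.1 + 2 * p.2.1 + 3 * p.2.2 = 2 * n + 1),
            ((γ n (p.1 : ℤ) (p.2.1 : ℤ) (p.2.2 : ℤ) : ℕ) : MvPolynomial (Fin 3) ℚ) *
              X 0 ^ p.1 * X 1 ^ p.2.1 * X 2 ^ p.2.2) := by
  have main : ∀ n : ℕ, 1 ≤ n → (fun p => D p)^[n - 1] (X 2) = Q n := by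
    intro n
    induction n with
    | zero => omega
    | succ k ih =>
      intro _
      rcases Nat.eq_zero_or_pos k with hk | hk
      · subst hk
        simpa using base
      · have hit : (fun p => D p)^[k + 1 - 1] (X 2 : MvPolynomial (Fin 3) ℚ)
            = (fun p => D p) ((fun p => D p)^[k - 1] (X 2)) := by
          obtain ⟨k', rfl⟩ : ∃ k', k = k' + 1 := ⟨k - 1, by omega⟩
          rw [Nat.add_sub_cancel, Nat.add_sub_cancel, Function.iterate_succ_apply']
        rw [hit, ih hk]
        exact step D hu hv hw k hk
  refine ⟨g, by simp [g_one], g_neg, ?_, ?_⟩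
  · intro n h2 i j k hi hj hk
    obtain ⟨n', rfl⟩ : ∃ n', n = n' + 2 := ⟨n - 2, by omega⟩
    simpa using g_rec n' i j k hi hj hk
  · intro n hn
    exact main n hn
end
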